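/- arXiv:1912.13289 — 10 statements merged into one kernel-verified Lean document; each statement's English description precedes it below -/
import Mathlib

section
/- Let H ∈ ℕ, let b_1,…,b_H ∈ ℝ, and let a_1,…,a_H ∈ ℝ. Then for every integer n ≥ 1, ∑_{i=1}^{H} a_i b_i^{n} = ∑_{i=1}^{H} 𝓕_i^{(n)} ( ∑_{j=1}^{H} a_j b_j^{i} ). -/
/-- `calC H b r` is the coefficient of `t^(H-r)` in the polynomial `∏_{i=1}^H (t + b i)`,
i.e. the `r`-th elementary symmetric polynomial of `b 1, …, b H`. -/
noncomputable def calC (H : ℕ) (b : ℕ → ℝ) (r : ℕ) : ℝ :=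
  (∏ i ∈ Finset.Icc 1 H, (Polynomial.X + Polynomial.C (b i))).coeff (H - r)

/-- `calF H b i n` is `𝓕_i^{(n)}`: it equals the Kronecker delta `δ_{n,i}` when `n ≤ H`,
and satisfies the recursion `𝓕_i^{(n)} = ∑_{r=1}^H (−1)^{r+1} 𝒞_r^H 𝓕_i^{(n−r)}` when `n > H`. -/
noncomputable def calF (H : ℕ) (b : ℕ → ℝ) (i : ℕ) : ℕ → ℝ
  | n =>
    if _h : n ≤ H then (if n = i then 1 else 0)
    else
      ∑ r ∈ (Finset.Icc 1 H).attach,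
        (-1 : ℝ) ^ ((r : ℕ) + 1) * calC H b r * calF H b i (n - r)
  termination_by n => n
  decreasing_by
    have h1 := Finset.mem_Icc.mp r.2
    omega

lemma calF_of_le (H : ℕ) (b : ℕ → ℝ) (i n : ℕ) (h : n ≤ H) :
    calF H b i n = if n = i then 1 else 0 := by
  rw [calF, dif_pos h]

lemma calF_of_gt (H : ℕ) (b : ℕ → ℝ) (i n : ℕ) (h : H < n) :
    calF H b i n = ∑ r ∈ Finset.Icc 1 H,
      (-1 : ℝ) ^ (r + 1) * calC H b r * calF H b i (n - r) := by
  rw [calF, dif_neg (by omega)]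
  exact Finset.sum_attach (Finset.Icc 1 H) (fun r => (-1:ℝ)^(r+1) * calC H b r * calF H b i (n - r))

lemma natDegree_prod (H : ℕ) (b : ℕ → ℝ) :
    (∏ i ∈ Finset.Icc 1 H, (Polynomial.X + Polynomial.C (b i))).natDegree = H := by
  rw [Polynomial.natDegree_prod _ _ (fun i _ => Polynomial.X_add_C_ne_zero (b i))]
  simp [Polynomial.natDegree_X_add_C]

lemma calC_zero (H : ℕ) (b : ℕ → ℝ) : calC H b 0 = 1 := by
  have hm : (∏ i ∈ Finset.Icc 1 H, (Polynomial.X + Polynomial.C (b i))).Monic :=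
    Polynomial.monic_prod_of_monic _ _ (fun i _ => Polynomial.monic_X_add_C (b i))
  have := hm.leadingCoeff
  rwa [Polynomial.leadingCoeff, natDegree_prod] at this

lemma pow_rec (H : ℕ) (b : ℕ → ℝ) (j : ℕ) (hj : j ∈ Finset.Icc 1 H) (n : ℕ) (hn : H < n) :
    b j ^ n = ∑ r ∈ Finset.Icc 1 H, (-1 : ℝ) ^ (r + 1) * calC H b r * b j ^ (n - r) := by
  set P := ∏ i ∈ Finset.Icc 1 H, (Polynomial.X + Polynomial.C (b i)) with hP
  have heval : P.eval (-(b j)) = 0 := by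
    rw [hP, Polynomial.eval_prod]
    exact Finset.prod_eq_zero hj (by simp)
  have hsum : ∑ k ∈ Finset.range (H + 1), P.coeff k * (-(b j)) ^ k = 0 := by
    have := Polynomial.eval_eq_sum_range (p := P) (x := -(b j))
    rw [natDegree_prod] at this
    rw [← this, heval]
  -- reflect: k = H - r
  have hsum2 : ∑ r ∈ Finset.range (H + 1), calC H b r * (-(b j)) ^ (H - r) = 0 := by
    rw [← hsum]
    rw [← Finset.sum_range_reflect (fun k => P.coeff k * (-(b j)) ^ k) (H + 1)]
    apply Finset.sum_congr rfl
    intro r hr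
    simp only [Finset.mem_range] at hr
    have : H + 1 - 1 - r = H - r := by omega
    rw [this]
    rfl
  -- multiply by (-1)^H * b j ^ (n - H)
  have hsum3 : ∑ r ∈ Finset.range (H + 1), (-1 : ℝ) ^ r * calC H b r * b j ^ (n - r) = 0 := by
    have := congrArg (fun x => (-1 : ℝ) ^ H * b j ^ (n - H) * x) hsum2
    simp only [mul_zero] at this
    rw [← this, Finset.mul_sum]
    apply Finset.sum_congr rfl
    intro r hr
    simp only [Finset.mem_range] at hr
    have hr' : r ≤ H := by omega
    rw [neg_pow]
    have h1 : (-1 : ℝ) ^ H * ((-1 : ℝ) ^ (H - r)) = (-1 : ℝ) ^ r := by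
      rw [← pow_add]
      have : H + (H - r) = 2 * (H - r) + r := by omega
      rw [this, pow_add, pow_mul, neg_one_sq, one_pow, one_mul]
    have h2 : b j ^ (n - H) * b j ^ (H - r) = b j ^ (n - r) := by
      rw [← pow_add]; congr 1; omega
    rw [show (n - r) = (n - H) + (H - r) by omega, pow_add, ← h1]
    ring
  -- split off r = 0
  rw [Finset.sum_range_succ'] at hsum3
  simp only [pow_zero, calC_zero, Nat.sub_zero, one_mul] at hsum3
  rw [← Finset.Ico_add_one_right_eq_Icc, Finset.sum_Ico_eq_sum_range,
    show H + 1 - 1 = H by omega]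
  have hbn : b j ^ n = ∑ s ∈ Finset.range H, -((-1:ℝ) ^ (s + 1) * calC H b (s + 1) * b j ^ (n - (s + 1))) := by
    rw [Finset.sum_neg_distrib]
    linarith
  rw [hbn]
  apply Finset.sum_congr rfl
  intro s _
  rw [show 1 + s = s + 1 by omega]
  rw [pow_succ ((-1:ℝ)) (s+1)]
  ring

lemma key (H : ℕ) (b : ℕ → ℝ) (c : ℕ → ℝ)
    (hc : ∀ n, H < n → c n = ∑ r ∈ Finset.Icc 1 H,
      (-1 : ℝ) ^ (r + 1) * calC H b r * c (n - r)) :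
    ∀ n, 1 ≤ n → c n = ∑ i ∈ Finset.Icc 1 H, calF H b i n * c i := by
  intro n
  induction n using Nat.strong_induction_on with
  | _ n ih =>
    intro hn1
    by_cases hnH : n ≤ H
    · rw [Finset.sum_congr rfl (fun i _ => by rw [calF_of_le H b i n hnH])]
      simp only [ite_mul, one_mul, zero_mul, Finset.sum_ite_eq]
      rw [if_pos (Finset.mem_Icc.mpr ⟨hn1, hnH⟩)]
    · push_neg at hnH
      conv_rhs => rw [Finset.sum_congr rfl (fun i _ => by rw [calF_of_gt H b i n hnH])]
      rw [hc n hnH]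
      conv_lhs => rw [Finset.sum_congr rfl (fun r hr => by
        have h2 := Finset.mem_Icc.mp hr
        rw [ih (n - r) (by omega) (by omega)])]
      conv_lhs => rw [Finset.sum_congr rfl (fun r (_ : r ∈ Finset.Icc 1 H) => Finset.mul_sum
        (Finset.Icc 1 H) (fun i => calF H b i (n - r) * c i) ((-1:ℝ) ^ (r + 1) * calC H b r))]
      rw [Finset.sum_comm]
      conv_rhs => rw [Finset.sum_congr rfl (fun i (_ : i ∈ Finset.Icc 1 H) => Finset.sum_mul
        (Finset.Icc 1 H) (fun r => (-1:ℝ) ^ (r + 1) * calC H b r * calF H b i (n - r)) (c i))]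
      apply Finset.sum_congr rfl
      intro i _
      apply Finset.sum_congr rfl
      intro r _
      ring

theorem statement1 (H : ℕ) (b a : ℕ → ℝ) :
    ∀ n : ℕ, 1 ≤ n →
      ∑ i ∈ Finset.Icc 1 H, a i * b i ^ n
        = ∑ i ∈ Finset.Icc 1 H, calF H b i n * (∑ j ∈ Finset.Icc 1 H, a j * b j ^ i) := by
  apply key H b (fun n => ∑ j ∈ Finset.Icc 1 H, a j * b j ^ n)
  intro n hn
  rw [Finset.sum_congr rfl (fun r (_ : r ∈ Finset.Icc 1 H) => Finset.mul_sum
    (Finset.Icc 1 H) (fun j => a j * b j ^ (n - r)) ((-1:ℝ) ^ (r + 1) * calC H b r))]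
  rw [Finset.sum_comm]
  apply Finset.sum_congr rfl
  intro j hj
  rw [pow_rec H b j hj n hn, Finset.mul_sum]
  apply Finset.sum_congr rfl
  intro r _
  ring
end

section
/- There exist constants A_0, A_1, B_0, B_1 > 1 such that for every parameter w = (a,b) ∈ W and every x ∈ (ℤ_{≥0})^M, (1/A_0) ∏_{m=1}^{M} (1/A_1)^{x_m} ≤ p(x|w)/q(x) ≤ B_0 ∏_{m=1}^{M} B_1^{x_m}. -/
/-- The M-dimensional Poisson mixture density at `x ∈ (ℤ≥0)^M`, with mixing weights `a`
and component means `b k : Fin M → ℝ`. -/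
noncomputable def mixture (H M : ℕ) (a : Fin H → ℝ) (b : Fin H → Fin M → ℝ)
    (x : Fin M → ℕ) : ℝ :=
  ∑ k, a k * ∏ m, Real.exp (-(b k m)) * (b k m) ^ (x m) / (Nat.factorial (x m))

lemma mix_bounds {H M : ℕ} (a : Fin H → ℝ) (b : Fin H → Fin M → ℝ)
    (γ₁ γ₂ : ℝ) (h1 : 0 < γ₁)
    (ha : ∀ k, 0 ≤ a k) (hsum : ∑ k, a k = 1)
    (hb : ∀ k m, γ₁ ≤ b k m ∧ b k m ≤ γ₂) (x : Fin M → ℕ) :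
    Real.exp (-(M * γ₂)) * ∏ m, γ₁ ^ (x m) / (Nat.factorial (x m))
      ≤ mixture H M a b x ∧
    mixture H M a b x ≤ ∏ m, γ₂ ^ (x m) / (Nat.factorial (x m)) := by
  have hfac : ∀ m : Fin M, (0:ℝ) < ((Nat.factorial (x m) : ℝ)) := fun m =>
    Nat.cast_pos.mpr (Nat.factorial_pos _)
  have hexpand : Real.exp (-(M * γ₂)) * ∏ m, γ₁ ^ (x m) / (Nat.factorial (x m))
      = ∏ m : Fin M, Real.exp (-γ₂) * γ₁ ^ (x m) / (Nat.factorial (x m)) := by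
    rw [show (-(M * γ₂)) = (M : ℕ) * (-γ₂) by ring, Real.exp_nat_mul]
    simp [mul_div_assoc, Finset.prod_mul_distrib, Finset.prod_const, Finset.card_univ]
  have hL : ∀ k, Real.exp (-(M * γ₂)) * ∏ m, γ₁ ^ (x m) / (Nat.factorial (x m))
      ≤ ∏ m, Real.exp (-(b k m)) * (b k m) ^ (x m) / (Nat.factorial (x m)) := by
    intro k
    rw [hexpand]
    apply Finset.prod_le_prod
    · intro m _
      positivity
    · intro m _
      rw [div_le_div_iff₀ (hfac m) (hfac m)]
      apply mul_le_mul_of_nonneg_right _ (le_of_lt (hfac m))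
      have h1' := (hb k m).1
      have h2' := (hb k m).2
      apply mul_le_mul (Real.exp_le_exp.mpr (by linarith))
        (pow_le_pow_left₀ h1.le h1' _) (by positivity) (Real.exp_pos _).le
  have hU : ∀ k, ∏ m, Real.exp (-(b k m)) * (b k m) ^ (x m) / (Nat.factorial (x m))
      ≤ ∏ m, γ₂ ^ (x m) / (Nat.factorial (x m)) := by
    intro k
    apply Finset.prod_le_prod
    · intro m _
      have hbm : 0 < b k m := lt_of_lt_of_le h1 (hb k m).1
      positivity
    · intro m _
      rw [div_le_div_iff₀ (hfac m) (hfac m)]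
      apply mul_le_mul_of_nonneg_right _ (le_of_lt (hfac m))
      have h1' := (hb k m).1
      have h2' := (hb k m).2
      have hbm : 0 < b k m := lt_of_lt_of_le h1 h1'
      calc Real.exp (-(b k m)) * (b k m) ^ (x m)
          ≤ 1 * γ₂ ^ (x m) := by
            apply mul_le_mul (Real.exp_le_one_iff.mpr (by linarith))
              (pow_le_pow_left₀ (by linarith) h2' _) (by positivity) one_pos.le
        _ = γ₂ ^ (x m) := one_mul _
  constructor
  · calc Real.exp (-(M * γ₂)) * ∏ m, γ₁ ^ (x m) / (Nat.factorial (x m))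
        = ∑ k, a k * (Real.exp (-(M * γ₂)) * ∏ m, γ₁ ^ (x m) / (Nat.factorial (x m))) := by
          rw [← Finset.sum_mul, hsum, one_mul]
      _ ≤ mixture H M a b x := by
          apply Finset.sum_le_sum
          intro k _
          exact mul_le_mul_of_nonneg_left (hL k) (ha k)
  · calc mixture H M a b x
        ≤ ∑ k, a k * ∏ m, γ₂ ^ (x m) / (Nat.factorial (x m)) := by
          apply Finset.sum_le_sum
          intro k _
          exact mul_le_mul_of_nonneg_left (hU k) (ha k)
      _ = ∏ m, γ₂ ^ (x m) / (Nat.factorial (x m)) := by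
          rw [← Finset.sum_mul, hsum, one_mul]

lemma ratio_bounds {p q L U C : ℝ} (hLpos : 0 < L) (hCpos : 0 < C)
    (hq1 : L ≤ q) (hq2 : q ≤ U) (hp1 : L ≤ p) (hp2 : p ≤ U) (hUC : U ≤ C * L) :
    1 / C ≤ p / q ∧ p / q ≤ C := by
  have hqpos : 0 < q := hLpos.trans_le hq1
  constructor
  · rw [le_div_iff₀ hqpos]
    calc 1 / C * q ≤ 1 / C * U := by
          apply mul_le_mul_of_nonneg_left hq2 (by positivity)
      _ ≤ 1 / C * (C * L) := by
          apply mul_le_mul_of_nonneg_left hUC (by positivity)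
      _ = L := by field_simp
      _ ≤ p := hp1
  · rw [div_le_iff₀ hqpos]
    calc p ≤ U := hp2
      _ ≤ C * L := hUC
      _ ≤ C * q := mul_le_mul_of_nonneg_left hq1 hCpos.le

theorem statement5 (M H Hstar : ℕ)
    (astar : Fin Hstar → ℝ) (bstar : Fin Hstar → Fin M → ℝ)
    (hastar : ∀ k, 0 < astar k) (hastarsum : ∑ k, astar k = 1)
    (hbstar : ∀ k m, 0 < bstar k m)
    (β₁ β₂ : ℝ) (hβ₁ : 0 < β₁) (hβ : β₁ ≤ β₂) :
    ∃ A₀ A₁ B₀ B₁ : ℝ, 1 < A₀ ∧ 1 < A₁ ∧ 1 < B₀ ∧ 1 < B₁ ∧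
      ∀ (a : Fin H → ℝ) (b : Fin H → Fin M → ℝ),
        (∀ k, 0 ≤ a k) → (∑ k, a k = 1) →
        (∀ k m, b k m ∈ Set.Icc β₁ β₂) →
        ∀ x : Fin M → ℕ,
          (1 / A₀) * ∏ m, (1 / A₁) ^ (x m)
              ≤ mixture H M a b x / mixture Hstar M astar bstar x ∧
          mixture H M a b x / mixture Hstar M astar bstar x
              ≤ B₀ * ∏ m, B₁ ^ (x m) := by
  classical
  obtain ⟨γ₁, hγ₁mem, hγ₁min⟩ := Finset.exists_min_image
    (insert β₁ (Finset.image (fun p : Fin Hstar × Fin M => bstar p.1 p.2) Finset.univ))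
    id ⟨β₁, Finset.mem_insert_self _ _⟩
  obtain ⟨γ₂, hγ₂mem, hγ₂max⟩ := Finset.exists_max_image
    (insert β₂ (Finset.image (fun p : Fin Hstar × Fin M => bstar p.1 p.2) Finset.univ))
    id ⟨β₂, Finset.mem_insert_self _ _⟩
  have hγ₁pos : 0 < γ₁ := by
    rcases Finset.mem_insert.mp hγ₁mem with h | h
    · rw [h]; exact hβ₁
    · simp only [Finset.mem_image, Finset.mem_univ, true_and] at h
      obtain ⟨p, hp⟩ := h
      rw [← hp]; exact hbstar p.1 p.2
  have hγ₁β₁ : γ₁ ≤ β₁ := hγ₁min β₁ (Finset.mem_insert_self _ _)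
  have hγ₁bstar : ∀ k m, γ₁ ≤ bstar k m := fun k m =>
    hγ₁min _ (Finset.mem_insert_of_mem
      (Finset.mem_image.mpr ⟨(k, m), Finset.mem_univ _, rfl⟩))
  have hβ₂γ₂ : β₂ ≤ γ₂ := hγ₂max β₂ (Finset.mem_insert_self _ _)
  have hbstarγ₂ : ∀ k m, bstar k m ≤ γ₂ := fun k m =>
    hγ₂max _ (Finset.mem_insert_of_mem
      (Finset.mem_image.mpr ⟨(k, m), Finset.mem_univ _, rfl⟩))
  have hγ₁γ₂ : γ₁ ≤ γ₂ := le_trans hγ₁β₁ (le_trans hβ hβ₂γ₂)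
  have hγ₂pos : 0 < γ₂ := lt_of_lt_of_le hγ₁pos hγ₁γ₂
  have hone_lt_exp : (1:ℝ) < Real.exp ((M : ℝ) * γ₂ + 1) := by
    have h0 : (0:ℝ) < (M : ℝ) * γ₂ + 1 := by
      have : (0:ℝ) ≤ (M : ℝ) * γ₂ := mul_nonneg (Nat.cast_nonneg M) hγ₂pos.le
      linarith
    calc (1:ℝ) = Real.exp 0 := Real.exp_zero.symm
      _ < Real.exp ((M : ℝ) * γ₂ + 1) := Real.exp_lt_exp.mpr h0
  have hone_lt_B₁ : (1:ℝ) < γ₂ / γ₁ + 1 := by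
    have : (0:ℝ) < γ₂ / γ₁ := div_pos hγ₂pos hγ₁pos
    linarith
  refine ⟨Real.exp ((M : ℝ) * γ₂ + 1), γ₂ / γ₁ + 1,
          Real.exp ((M : ℝ) * γ₂ + 1), γ₂ / γ₁ + 1,
          hone_lt_exp, hone_lt_B₁, hone_lt_exp, hone_lt_B₁, ?_⟩
  intro a b ha hsum hb x
  have hq := mix_bounds astar bstar γ₁ γ₂ hγ₁pos (fun k => (hastar k).le) hastarsum
    (fun k m => ⟨hγ₁bstar k m, hbstarγ₂ k m⟩) x
  have hp := mix_bounds a b γ₁ γ₂ hγ₁pos ha hsum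
    (fun k m => ⟨le_trans hγ₁β₁ (hb k m).1, le_trans (hb k m).2 hβ₂γ₂⟩) x
  set L : ℝ := Real.exp (-(M * γ₂)) * ∏ m, γ₁ ^ (x m) / (Nat.factorial (x m)) with hLdef
  set U : ℝ := ∏ m, γ₂ ^ (x m) / (Nat.factorial (x m)) with hUdef
  have hprodpos : 0 < ∏ m, γ₁ ^ (x m) / ((Nat.factorial (x m) : ℝ)) :=
    Finset.prod_pos (fun m _ => by
      have hfm : (0:ℝ) < ((Nat.factorial (x m) : ℝ)) := Nat.cast_pos.mpr (Nat.factorial_pos _)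
      positivity)
  have hLpos : 0 < L := mul_pos (Real.exp_pos _) hprodpos
  set B₁ : ℝ := γ₂ / γ₁ + 1 with hB₁def
  have hB₁pos : 0 < B₁ := lt_trans one_pos hone_lt_B₁
  have hprodB₁pos : 0 < ∏ m, B₁ ^ (x m) :=
    Finset.prod_pos (fun m _ => by positivity)
  set C : ℝ := Real.exp ((M : ℝ) * γ₂ + 1) * ∏ m, B₁ ^ (x m) with hCdef
  have hCpos : 0 < C := mul_pos (Real.exp_pos _) hprodB₁pos
  have hUC : U ≤ C * L := by
    have hmul : γ₂ ≤ B₁ * γ₁ := by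
      rw [hB₁def]
      have : (γ₂ / γ₁ + 1) * γ₁ = γ₂ + γ₁ := by field_simp
      rw [this]; linarith
    have step1 : U ≤ ∏ m, (B₁ * γ₁) ^ (x m) / (Nat.factorial (x m)) := by
      rw [hUdef]
      apply Finset.prod_le_prod
      · intro m _
        have hfm : (0:ℝ) < ((Nat.factorial (x m) : ℝ)) := Nat.cast_pos.mpr (Nat.factorial_pos _)
        positivity
      · intro m _
        have hfm : (0:ℝ) < ((Nat.factorial (x m) : ℝ)) := Nat.cast_pos.mpr (Nat.factorial_pos _)
        exact div_le_div₀ (by positivity) (pow_le_pow_left₀ hγ₂pos.le hmul _) hfm le_rfl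
    have step2 : ∏ m, (B₁ * γ₁) ^ (x m) / ((Nat.factorial (x m) : ℝ))
        = (∏ m, B₁ ^ (x m)) * ∏ m, γ₁ ^ (x m) / ((Nat.factorial (x m) : ℝ)) := by
      rw [← Finset.prod_mul_distrib]
      apply Finset.prod_congr rfl
      intro m _
      rw [mul_pow, mul_div_assoc]
    have hexp : Real.exp ((M : ℝ) * γ₂ + 1) * Real.exp (-(M * γ₂)) = Real.exp 1 := by
      rw [← Real.exp_add]
      norm_num
    have hone_le : (1:ℝ) ≤ Real.exp 1 := by
      have := Real.add_one_le_exp (1:ℝ)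
      linarith
    calc U ≤ ∏ m, (B₁ * γ₁) ^ (x m) / (Nat.factorial (x m)) := step1
      _ = (∏ m, B₁ ^ (x m)) * ∏ m, γ₁ ^ (x m) / ((Nat.factorial (x m) : ℝ)) := step2
      _ ≤ Real.exp 1 * ((∏ m, B₁ ^ (x m)) * ∏ m, γ₁ ^ (x m) / ((Nat.factorial (x m) : ℝ))) :=
          le_mul_of_one_le_left (by positivity) hone_le
      _ = C * L := by rw [hCdef, hLdef, ← hexp]; ring
  have hmain := ratio_bounds hLpos hCpos hq.1 hq.2 hp.1 hp.2 hUC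
  constructor
  · have heq : (1 / Real.exp ((M : ℝ) * γ₂ + 1)) * ∏ m, (1 / B₁) ^ (x m) = 1 / C := by
      rw [hCdef, one_div (Real.exp _ * _), mul_inv]
      congr 1
      · rw [one_div]
      · rw [← Finset.prod_inv_distrib]
        apply Finset.prod_congr rfl
        intro m _
        rw [div_pow, one_pow, one_div]
    rw [heq]
    exact hmain.1
  · exact hmain.2
end

section
/- There exist constants C_0, C_1 > 0 such that for every parameter w ∈ W and every x ∈ (ℤ_{≥0})^M, S(p(x|w)/q(x)) ≤ C_0 ∑_{m=1}^{M} x_m + C_1, where S(t) := (−log t + t − 1)/(t−1)² for t > 0, t ≠ 1, and S(1) := 1. -/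
/-- `S t = (−log t + t − 1)/(t−1)²` for `t ≠ 1`, and `S 1 = 1`. -/
noncomputable def S (t : ℝ) : ℝ :=
  if t = 1 then 1 else (-Real.log t + t - 1) / (t - 1) ^ 2

lemma S_le {t : ℝ} (ht : 0 < t) : S t ≤ 4 * max 0 (-Real.log t) + 2 := by
  have hmax : (0:ℝ) ≤ max 0 (-Real.log t) := le_max_left _ _
  unfold S
  split_ifs with h1
  · simp [h1]
  · have hne : t - 1 ≠ 0 := sub_ne_zero.mpr h1
    have hden : 0 < (t-1)^2 := by positivity
    have hlog : Real.log t ≤ t - 1 := Real.log_le_sub_one_of_pos ht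
    have hN : 0 ≤ -Real.log t + t - 1 := by linarith
    have h2 : -Real.log t ≤ 1/t - 1 := by
      have := Real.log_le_sub_one_of_pos (show (0:ℝ) < t⁻¹ by positivity)
      rw [Real.log_inv] at this
      simpa [one_div] using this
    rcases le_or_gt (1/2) t with hhalf | hhalf
    · have key : (-Real.log t + t - 1) / (t-1)^2 ≤ 2 := by
        rw [div_le_iff₀ hden]
        have h3 : (1/t) * t = 1 := by field_simp
        nlinarith [mul_nonneg (sq_nonneg (t-1)) (by linarith : (0:ℝ) ≤ 2*t - 1), sq_nonneg (t-1)]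
      linarith
    · have hq : (1:ℝ)/4 ≤ (t-1)^2 := by nlinarith
      have key : (-Real.log t + t - 1) / (t-1)^2 ≤ 4 * (-Real.log t + t - 1) := by
        rw [div_le_iff₀ hden]
        nlinarith
      have hlt : -Real.log t ≤ max 0 (-Real.log t) := le_max_right _ _
      have : 4 * (-Real.log t + t - 1) ≤ 4 * max 0 (-Real.log t) := by nlinarith
      linarith

theorem statement6 (M H Hstar : ℕ)
    (astar : Fin Hstar → ℝ) (bstar : Fin Hstar → Fin M → ℝ)
    (hastar : ∀ k, 0 < astar k) (hastarsum : ∑ k, astar k = 1)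
    (hbstar : ∀ k m, 0 < bstar k m)
    (β₁ β₂ : ℝ) (hβ₁ : 0 < β₁) (hβ : β₁ ≤ β₂) :
    ∃ C₀ > (0 : ℝ), ∃ C₁ > (0 : ℝ),
      ∀ (a : Fin H → ℝ) (b : Fin H → Fin M → ℝ),
        (∀ k, 0 ≤ a k) → (∑ k, a k = 1) →
        (∀ k m, b k m ∈ Set.Icc β₁ β₂) →
        ∀ x : Fin M → ℕ,
          S (mixture H M a b x / mixture Hstar M astar bstar x)
            ≤ C₀ * ∑ m, (x m : ℝ) + C₁ := by
  have hβ₂ : 0 < β₂ := lt_of_lt_of_le hβ₁ hβ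
  have hHstar : Hstar ≠ 0 := by rintro rfl; simp at hastarsum
  have : Nonempty (Fin Hstar) := Fin.pos_iff_nonempty.mp (Nat.pos_of_ne_zero hHstar)
  set B : ℝ := β₁ + 1 + ∑ k, ∑ m, bstar k m with hBdef
  have hSnn : 0 ≤ ∑ k, ∑ m, bstar k m :=
    Finset.sum_nonneg fun k _ => Finset.sum_nonneg fun m _ => (hbstar k m).le
  have hBpos : 0 < B := by rw [hBdef]; linarith
  have hBgt : β₁ < B := by rw [hBdef]; linarith
  have hbB : ∀ k m, bstar k m ≤ B := by
    intro k m
    have h1 : bstar k m ≤ ∑ m', bstar k m' :=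
      Finset.single_le_sum (fun m' _ => (hbstar k m').le) (Finset.mem_univ m)
    have h2 : (∑ m', bstar k m') ≤ ∑ k', ∑ m', bstar k' m' :=
      Finset.single_le_sum (fun k' _ => Finset.sum_nonneg fun m' _ => (hbstar k' m').le)
        (Finset.mem_univ k)
    linarith
  have hlogpos : 0 < Real.log (B / β₁) := Real.log_pos ((one_lt_div hβ₁).mpr hBgt)
  refine ⟨4 * Real.log (B / β₁), by linarith, 4 * M * β₂ + 2, ?_, ?_⟩
  · have hM : (0:ℝ) ≤ M := Nat.cast_nonneg M
    nlinarith
  intro a b ha hasum hb x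
  set n : ℝ := ∑ m, (x m : ℝ) with hn
  have hnnn : 0 ≤ n := Finset.sum_nonneg fun m _ => Nat.cast_nonneg _
  set L : ℝ := ∏ m, Real.exp (-β₂) * β₁ ^ (x m) / (Nat.factorial (x m)) with hLdef
  set U : ℝ := ∏ m, B ^ (x m) / (Nat.factorial (x m)) with hUdef
  set ρ : ℝ := ∏ m, Real.exp (-β₂) * (β₁ / B) ^ (x m) with hρdef
  have hLpos : 0 < L := Finset.prod_pos fun m _ => by positivity
  have hUpos : 0 < U := Finset.prod_pos fun m _ => by positivity
  have hρpos : 0 < ρ := Finset.prod_pos fun m _ => by positivity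
  -- L = ρ * U
  have hLρU : L = ρ * U := by
    rw [hLdef, hρdef, hUdef, ← Finset.prod_mul_distrib]
    refine Finset.prod_congr rfl fun m _ => ?_
    have hfac : (0:ℝ) < (Nat.factorial (x m) : ℝ) := by positivity
    rw [div_pow]
    field_simp
  -- q ≤ U
  have hq_le : mixture Hstar M astar bstar x ≤ U := by
    unfold mixture
    calc ∑ k, astar k * ∏ m, Real.exp (-(bstar k m)) * (bstar k m) ^ (x m) / (Nat.factorial (x m))
        ≤ ∑ k, astar k * U := by
          refine Finset.sum_le_sum fun k _ => ?_
          refine mul_le_mul_of_nonneg_left ?_ (hastar k).le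
          rw [hUdef]
          refine Finset.prod_le_prod (fun m _ => by have := (hbstar k m).le; positivity) fun m _ => ?_
          have hfac : (0:ℝ) < (Nat.factorial (x m) : ℝ) := by positivity
          refine div_le_div_of_nonneg_right ?_ hfac.le
          calc Real.exp (-(bstar k m)) * (bstar k m) ^ (x m)
              ≤ 1 * B ^ (x m) := by
                refine mul_le_mul ?_ ?_ (pow_nonneg (hbstar k m).le _) zero_le_one
                · exact Real.exp_le_one_iff.mpr (by linarith [hbstar k m])
                · exact pow_le_pow_left₀ (hbstar k m).le (hbB k m) _
            _ = B ^ (x m) := one_mul _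
      _ = U := by rw [← Finset.sum_mul, hastarsum, one_mul]
  -- L ≤ p
  have hp_ge : L ≤ mixture H M a b x := by
    unfold mixture
    calc L = ∑ k, a k * L := by rw [← Finset.sum_mul, hasum, one_mul]
      _ ≤ ∑ k, a k * ∏ m, Real.exp (-(b k m)) * (b k m) ^ (x m) / (Nat.factorial (x m)) := by
          refine Finset.sum_le_sum fun k _ => ?_
          refine mul_le_mul_of_nonneg_left ?_ (ha k)
          rw [hLdef]
          refine Finset.prod_le_prod (fun m _ => by positivity) fun m _ => ?_
          obtain ⟨hb1, hb2⟩ := hb k m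
          gcongr
  have hqpos : 0 < mixture Hstar M astar bstar x := by
    unfold mixture
    refine Finset.sum_pos (fun k _ => mul_pos (hastar k) (Finset.prod_pos fun m _ => by
      have := hbstar k m; positivity)) Finset.univ_nonempty
  have hppos : 0 < mixture H M a b x := lt_of_lt_of_le hLpos hp_ge
  set t : ℝ := mixture H M a b x / mixture Hstar M astar bstar x with htdef
  have htpos : 0 < t := div_pos hppos hqpos
  have hρt : ρ ≤ t := by
    rw [htdef, le_div_iff₀ hqpos]
    calc ρ * mixture Hstar M astar bstar x ≤ ρ * U := by
          exact mul_le_mul_of_nonneg_left hq_le hρpos.le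
      _ = L := hLρU.symm
      _ ≤ mixture H M a b x := hp_ge
  -- -log ρ = M β₂ + log (B/β₁) * n
  have hlogρ : Real.log ρ = -(M * β₂) - Real.log (B / β₁) * n := by
    rw [hρdef, Real.log_prod (fun m _ => by positivity)]
    have : ∀ m : Fin M, Real.log (Real.exp (-β₂) * (β₁ / B) ^ (x m))
        = -β₂ - Real.log (B / β₁) * (x m) := by
      intro m
      rw [Real.log_mul (Real.exp_ne_zero _) (by positivity), Real.log_exp, Real.log_pow,
        Real.log_div hβ₁.ne' hBpos.ne', Real.log_div hBpos.ne' hβ₁.ne']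
      ring
    rw [Finset.sum_congr rfl fun m _ => this m, Finset.sum_sub_distrib]
    simp [hn, Finset.mul_sum, Finset.card_univ]
  have hlogρ_nonneg : 0 ≤ -Real.log ρ := by
    rw [hlogρ]
    have hM : (0:ℝ) ≤ M := Nat.cast_nonneg M
    nlinarith
  have hlogt : -Real.log t ≤ -Real.log ρ :=
    neg_le_neg (Real.log_le_log hρpos hρt)
  have hmaxle : max 0 (-Real.log t) ≤ -Real.log ρ := max_le hlogρ_nonneg hlogt
  have hS := S_le htpos
  have hfinal : 4 * max 0 (-Real.log t) + 2 ≤ 4 * Real.log (B / β₁) * n + (4 * M * β₂ + 2) := by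
    have : -Real.log ρ = M * β₂ + Real.log (B / β₁) * n := by rw [hlogρ]; ring
    nlinarith
  calc S t ≤ 4 * max 0 (-Real.log t) + 2 := hS
    _ ≤ 4 * Real.log (B / β₁) * n + (4 * M * β₂ + 2) := hfinal
end

section
/- Let H, H*, M ∈ ℕ, let a_1,…,a_H ∈ ℝ and a*_1,…,a*_{H*} ∈ ℝ, and let b_1,…,b_H and b*_1,…,b*_{H*} be vectors in (ℝ_{>0})^M. If ∑_{k=1}^{H} a_k b_k^{x} = ∑_{k=1}^{H*} a*_k (b*_k)^{x} for every multi-index x ∈ {0,1,…,H+H*−1}^M, then ∑_{k=1}^{H} a_k b_k^{x} = ∑_{k=1}^{H*} a*_k (b*_k)^{x} for every x ∈ (ℤ_{≥0})^M. -/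
open Polynomial Finset

lemma one_var (N : ℕ) (c t : Fin N → ℝ)
    (h : ∀ n < N, ∑ k, c k * t k ^ n = 0) :
    ∀ n, ∑ k, c k * t k ^ n = 0 := by
  rcases Nat.eq_zero_or_pos N with rfl | hN
  · intro n; simp
  set p : Polynomial ℝ := ∏ k, (X - C (t k)) with hp
  have hmono : ∀ k ∈ (Finset.univ : Finset (Fin N)), (X - C (t k)).Monic :=
    fun k _ => monic_X_sub_C (t k)
  have hmonic : p.Monic := monic_prod_of_monic _ _ hmono
  have hdeg : p.natDegree = N := by
    rw [hp, natDegree_prod_of_monic _ _ hmono]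
    simp [natDegree_X_sub_C]
  have heval : ∀ k, p.eval (t k) = 0 := by
    intro k
    rw [hp, eval_prod]
    exact Finset.prod_eq_zero (Finset.mem_univ k) (by simp)
  have hpow : ∀ k, t k ^ N = -∑ i ∈ Finset.range N, p.coeff i * t k ^ i := by
    intro k
    have h0 := heval k
    rw [eval_eq_sum_range, hdeg, Finset.sum_range_succ] at h0
    have hc : p.coeff N = 1 := by
      have := hmonic.coeff_natDegree; rwa [hdeg] at this
    rw [hc, one_mul] at h0
    linarith
  intro n
  induction n using Nat.strong_induction_on with
  | _ n ih =>
    rcases lt_or_ge n N with hn | hn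
    · exact h n hn
    · obtain ⟨j, rfl⟩ : ∃ j, n = j + N := ⟨n - N, (Nat.sub_add_cancel hn).symm⟩
      calc ∑ k, c k * t k ^ (j + N)
          = ∑ k, c k * t k ^ j * (-∑ i ∈ Finset.range N, p.coeff i * t k ^ i) := by
            refine Finset.sum_congr rfl fun k _ => ?_
            rw [← hpow k, pow_add, mul_assoc]
        _ = -∑ i ∈ Finset.range N, p.coeff i * ∑ k, c k * t k ^ (j + i) := by
            simp only [mul_neg, Finset.sum_neg_distrib, Finset.mul_sum, neg_inj]
            rw [Finset.sum_comm]
            exact Finset.sum_congr rfl fun i _ => Finset.sum_congr rfl fun k _ => by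
              rw [pow_add]; ring
        _ = 0 := by
            rw [neg_eq_zero]
            refine Finset.sum_eq_zero fun i hi => ?_
            rw [ih (j + i) (by have := Finset.mem_range.mp hi; omega), mul_zero]

lemma multi : ∀ (M N : ℕ) (c : Fin N → ℝ) (d : Fin N → Fin M → ℝ),
    (∀ x : Fin M → ℕ, (∀ m, x m < N) → ∑ k, c k * ∏ m, d k m ^ x m = 0) →
    ∀ x : Fin M → ℕ, ∑ k, c k * ∏ m, d k m ^ x m = 0 := by
  intro M
  induction M with
  | zero => intro N c d h x; exact h x (fun m => m.elim0)
  | succ M ih =>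
    intro N c d h x
    have step1 : ∀ (y : Fin M → ℕ), (∀ m, y m < N) → ∀ n : ℕ,
        ∑ k, (c k * ∏ m, d k m.succ ^ y m) * d k 0 ^ n = 0 := by
      intro y hy
      apply one_var N _ (fun k => d k 0)
      intro n hn
      have h0 := h (Fin.cons n y) (by
        intro m
        refine Fin.cases ?_ ?_ m
        · simpa using hn
        · intro i; simpa using hy i)
      rw [← h0]
      refine Finset.sum_congr rfl fun k _ => ?_
      rw [Fin.prod_univ_succ]
      simp only [Fin.cons_zero, Fin.cons_succ]
      ring
    have step2 : ∀ n : ℕ, ∀ y : Fin M → ℕ,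
        ∑ k, (c k * d k 0 ^ n) * ∏ m, d k m.succ ^ y m = 0 := by
      intro n
      apply ih N (fun k => c k * d k 0 ^ n) (fun k m => d k m.succ)
      intro y hy
      rw [← step1 y hy n]
      refine Finset.sum_congr rfl fun k _ => ?_
      ring
    have h2 := step2 (x 0) (fun m => x m.succ)
    rw [← h2]
    refine Finset.sum_congr rfl fun k _ => ?_
    rw [Fin.prod_univ_succ]
    ring

theorem statement7 (H Hstar M : ℕ)
    (a : Fin H → ℝ) (astar : Fin Hstar → ℝ)
    (b : Fin H → Fin M → ℝ) (bstar : Fin Hstar → Fin M → ℝ)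
    (hb : ∀ k m, 0 < b k m) (hbstar : ∀ k m, 0 < bstar k m)
    (hyp : ∀ x : Fin M → ℕ, (∀ m, x m < H + Hstar) →
      ∑ k, a k * ∏ m, b k m ^ (x m) = ∑ k, astar k * ∏ m, bstar k m ^ (x m)) :
    ∀ x : Fin M → ℕ,
      ∑ k, a k * ∏ m, b k m ^ (x m) = ∑ k, astar k * ∏ m, bstar k m ^ (x m) := by
  set c : Fin (H + Hstar) → ℝ := Fin.addCases a (fun k => -astar k) with hc
  set d : Fin (H + Hstar) → Fin M → ℝ := Fin.addCases b bstar with hd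
  have key : ∀ x : Fin M → ℕ, ∑ k, c k * ∏ m, d k m ^ x m =
      (∑ k, a k * ∏ m, b k m ^ (x m)) - (∑ k, astar k * ∏ m, bstar k m ^ (x m)) := by
    intro x
    rw [Fin.sum_univ_add]
    simp [hc, hd, sub_eq_add_neg, Finset.sum_neg_distrib, neg_mul]
  intro x
  have h0 := multi M (H + Hstar) c d (fun y hy => by rw [key y, hyp y hy, sub_self]) x
  rw [key x] at h0
  linarith
end

section
/- Let N ∈ ℕ, let c_1,…,c_N ∈ ℝ, let b_1,…,b_N ∈ ℝ satisfy ∏_{i=1}^{N} (1+|b_i|) ≤ R/N for a constant R ≥ 1, and set f_n := ∑_{k=1}^{N} c_k b_k^n for n ∈ ℤ_{≥0}. Then ∑_{n=0}^{∞} (f_n/n!)² ≤ N e^{2R} ∑_{i=0}^{N−1} f_i². -/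
open Polynomial Finset

lemma fact_two_mul_le' (n : ℕ) :
    Nat.factorial (2 * n) ≤ 4 ^ n * (Nat.factorial n) ^ 2 := by
  induction n with
  | zero => simp
  | succ n ih =>
    have h1 : 2 * (n + 1) = (2 * n + 1) + 1 := by ring
    rw [h1, Nat.factorial_succ, Nat.factorial_succ, Nat.factorial_succ]
    have h2 : (2 * n + 1 + 1) * ((2 * n + 1) * Nat.factorial (2 * n))
        ≤ (2 * n + 2) * ((2 * n + 2) * (4 ^ n * (Nat.factorial n) ^ 2)) := by
      have := Nat.mul_le_mul (le_refl (2 * n + 1)) ih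
      nlinarith [Nat.factorial_pos (2 * n)]
    calc (2 * n + 1 + 1) * ((2 * n + 1) * Nat.factorial (2 * n))
        ≤ (2 * n + 2) * ((2 * n + 2) * (4 ^ n * (Nat.factorial n) ^ 2)) := h2
      _ = 4 ^ (n + 1) * ((n + 1) * Nat.factorial n) ^ 2 := by ring

lemma coeff_abs_sum_le {ι : Type*} [DecidableEq ι] (s : Finset ι) (b : ι → ℝ) :
    ∑ j ∈ Finset.range (s.card + 1), |(∏ i ∈ s, (X - C (b i))).coeff j|
      ≤ ∏ i ∈ s, (1 + |b i|) := by
  induction s using Finset.cons_induction with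
  | empty => simp
  | cons a s ha ih =>
    rw [Finset.prod_cons, Finset.prod_cons, Finset.card_cons]
    set p : ℝ[X] := ∏ i ∈ s, (X - C (b i)) with hp
    have hmonic : p.Monic := monic_prod_of_monic _ _ fun i _ => monic_X_sub_C (b i)
    have hdeg : p.natDegree = s.card := by
      rw [hp, Polynomial.natDegree_prod_of_monic _ _ fun i _ => monic_X_sub_C (b i)]
      simp
    have hcoeffz : p.coeff (s.card + 1) = 0 := by
      apply Polynomial.coeff_eq_zero_of_natDegree_lt
      omega
    have key : ∀ j, ((X - C (b a)) * p).coeff j = (X * p).coeff j - b a * p.coeff j := by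
      intro j
      rw [sub_mul, Polynomial.coeff_sub, Polynomial.coeff_C_mul]
    have hL : 0 ≤ ∑ j ∈ Finset.range (s.card + 1), |p.coeff j| :=
      Finset.sum_nonneg fun _ _ => abs_nonneg _
    calc ∑ j ∈ Finset.range (s.card + 1 + 1), |((X - C (b a)) * p).coeff j|
        ≤ ∑ j ∈ Finset.range (s.card + 2), (|(X * p).coeff j| + |b a| * |p.coeff j|) := by
          apply Finset.sum_le_sum
          intro j _
          rw [key j]
          calc |(X * p).coeff j - b a * p.coeff j|
              ≤ |(X * p).coeff j| + |b a * p.coeff j| := abs_sub _ _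
            _ = |(X * p).coeff j| + |b a| * |p.coeff j| := by rw [abs_mul]
      _ = (∑ j ∈ Finset.range (s.card + 2), |(X * p).coeff j|)
            + |b a| * ∑ j ∈ Finset.range (s.card + 2), |p.coeff j| := by
          rw [Finset.sum_add_distrib, Finset.mul_sum]
      _ = (∑ j ∈ Finset.range (s.card + 1), |p.coeff j|)
            + |b a| * ∑ j ∈ Finset.range (s.card + 1), |p.coeff j| := by
          congr 1
          · rw [Finset.sum_range_succ']
            simp [Polynomial.coeff_X_mul, Polynomial.mul_coeff_zero]
          · rw [Finset.sum_range_succ, hcoeffz]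
            simp
      _ = (1 + |b a|) * ∑ j ∈ Finset.range (s.card + 1), |p.coeff j| := by ring
      _ ≤ (1 + |b a|) * ∏ i ∈ s, (1 + |b i|) := by
          apply mul_le_mul_of_nonneg_left ih
          positivity

theorem statement9 (N : ℕ) (c b : Fin N → ℝ) (R : ℝ) (hR : 1 ≤ R)
    (hb : ∏ i, (1 + |b i|) ≤ R / N) :
    Summable (fun n : ℕ => ((∑ k, c k * b k ^ n) / (Nat.factorial n : ℝ)) ^ 2) ∧
    ∑' n : ℕ, ((∑ k, c k * b k ^ n) / (Nat.factorial n : ℝ)) ^ 2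
      ≤ N * Real.exp (2 * R) * ∑ i ∈ Finset.range N, (∑ k, c k * b k ^ i) ^ 2 := by
  -- N ≥ 1
  rcases Nat.eq_zero_or_pos N with hN0 | hN
  · exfalso
    subst hN0
    simp at hb
    linarith
  set f : ℕ → ℝ := fun n => ∑ k, c k * b k ^ n with hf
  set Q : ℝ := ∏ i, (1 + |b i|) with hQ
  have hQ1 : (1 : ℝ) ≤ Q := by
    rw [hQ]
    calc (1:ℝ) = ∏ _i : Fin N, (1:ℝ) := by simp
      _ ≤ ∏ i : Fin N, (1 + |b i|) := by
          apply Finset.prod_le_prod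
          · intro i _; norm_num
          · intro i _; have := abs_nonneg (b i); linarith
  have hQ0 : (0 : ℝ) ≤ Q := by linarith
  have hNR : (N : ℝ) ≥ 1 := by exact_mod_cast hN
  have hQR : Q ≤ R := by
    calc Q ≤ R / N := hb
      _ ≤ R := div_le_self (by linarith) hNR
  set S : ℝ := ∑ i ∈ Finset.range N, (f i) ^ 2 with hS
  have hS0 : 0 ≤ S := Finset.sum_nonneg fun _ _ => sq_nonneg _
  set M : ℝ := Real.sqrt S with hM
  have hM0 : 0 ≤ M := Real.sqrt_nonneg _
  have hM2 : M ^ 2 = S := Real.sq_sqrt hS0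
  -- characteristic polynomial
  set p : ℝ[X] := ∏ i : Fin N, (X - C (b i)) with hp
  have hmonic : p.Monic := monic_prod_of_monic _ _ fun i _ => monic_X_sub_C (b i)
  have hdeg : p.natDegree = N := by
    rw [hp, Polynomial.natDegree_prod_of_monic _ _ fun i _ => monic_X_sub_C (b i)]
    simp
  have hcoeffN : p.coeff N = 1 := by
    have := hmonic.coeff_natDegree
    rwa [hdeg] at this
  have hcoeff_sum : ∑ j ∈ Finset.range (N + 1), |p.coeff j| ≤ Q := by
    have := coeff_abs_sum_le Finset.univ b
    simpa using this
  have hcoeff_sum' : ∑ j ∈ Finset.range N, |p.coeff j| ≤ Q - 1 := by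
    have h := hcoeff_sum
    rw [Finset.sum_range_succ, hcoeffN] at h
    simp at h
    linarith
  -- eval at roots is zero
  have heval : ∀ k : Fin N, ∑ j ∈ Finset.range (N + 1), p.coeff j * (b k) ^ j = 0 := by
    intro k
    have h1 : p.eval (b k) = 0 := by
      rw [hp, Polynomial.eval_prod]
      apply Finset.prod_eq_zero (Finset.mem_univ k)
      simp
    rw [Polynomial.eval_eq_sum_range, hdeg] at h1
    exact h1
  -- recurrence
  have hrec : ∀ m : ℕ, f (m + N) = -∑ j ∈ Finset.range N, p.coeff j * f (m + j) := by
    intro m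
    have h1 : ∑ j ∈ Finset.range (N + 1), p.coeff j * f (m + j) = 0 := by
      have : ∀ j ∈ Finset.range (N + 1), p.coeff j * f (m + j)
          = ∑ k : Fin N, p.coeff j * (c k * (b k ^ m * b k ^ j)) := by
        intro j _
        rw [hf]
        simp only
        rw [Finset.mul_sum]
        congr 1
        ext k
        rw [pow_add]
      rw [Finset.sum_congr rfl this, Finset.sum_comm]
      apply Finset.sum_eq_zero
      intro k _
      have : ∑ j ∈ Finset.range (N + 1), p.coeff j * (c k * (b k ^ m * b k ^ j))
          = (c k * b k ^ m) * ∑ j ∈ Finset.range (N + 1), p.coeff j * b k ^ j := by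
        rw [Finset.mul_sum]
        congr 1
        ext j
        ring
      rw [this, heval k, mul_zero]
    rw [Finset.sum_range_succ, hcoeffN] at h1
    have : f (m + N) = 1 * f (m + N) := by ring
    linarith [h1]
  -- key bound |f n| ≤ M * Q ^ n
  have hbound : ∀ n : ℕ, |f n| ≤ M * Q ^ n := by
    intro n
    induction n using Nat.strong_induction_on with
    | _ n ih =>
      rcases lt_or_ge n N with hn | hn
      · have h1 : (f n) ^ 2 ≤ S := by
          rw [hS]
          exact Finset.single_le_sum (fun i _ => sq_nonneg (f i)) (Finset.mem_range.mpr hn)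
        have h2 : |f n| ≤ M := by
          rw [hM]
          have : |f n| = Real.sqrt ((f n) ^ 2) := (Real.sqrt_sq_eq_abs _).symm
          rw [this]
          exact Real.sqrt_le_sqrt h1
        calc |f n| ≤ M := h2
          _ ≤ M * Q ^ n := by nlinarith [one_le_pow₀ hQ1 (n := n), hM0]
      · obtain ⟨m, rfl⟩ : ∃ m, n = m + N := ⟨n - N, by omega⟩
        rw [hrec m, abs_neg]
        calc |∑ j ∈ Finset.range N, p.coeff j * f (m + j)|
            ≤ ∑ j ∈ Finset.range N, |p.coeff j * f (m + j)| := Finset.abs_sum_le_sum_abs _ _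
          _ ≤ ∑ j ∈ Finset.range N, |p.coeff j| * (M * Q ^ (m + N - 1)) := by
              apply Finset.sum_le_sum
              intro j hj
              rw [abs_mul]
              apply mul_le_mul_of_nonneg_left _ (abs_nonneg _)
              have hj' : j < N := Finset.mem_range.mp hj
              calc |f (m + j)| ≤ M * Q ^ (m + j) := ih (m + j) (by omega)
                _ ≤ M * Q ^ (m + N - 1) := by
                    apply mul_le_mul_of_nonneg_left _ hM0
                    exact pow_le_pow_right₀ hQ1 (by omega)
          _ = (∑ j ∈ Finset.range N, |p.coeff j|) * (M * Q ^ (m + N - 1)) := by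
              rw [← Finset.sum_mul]
          _ ≤ (Q - 1) * (M * Q ^ (m + N - 1)) := by
              apply mul_le_mul_of_nonneg_right hcoeff_sum'
              positivity
          _ ≤ Q * (M * Q ^ (m + N - 1)) := by
              apply mul_le_mul_of_nonneg_right (by linarith)
              positivity
          _ = M * Q ^ (m + N - 1 + 1) := by ring
          _ = M * Q ^ (m + N) := by congr 2; omega
  -- termwise comparison function
  set G : ℕ → ℝ := fun m => S * ((2 * R) ^ m / Nat.factorial m) with hG
  have hGsummable : Summable G := (Real.summable_pow_div_factorial (2 * R)).mul_left S
  have hterm : ∀ n : ℕ, (f n / (Nat.factorial n : ℝ)) ^ 2 ≤ G (2 * n) := by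
    intro n
    have hfact : (0 : ℝ) < (Nat.factorial n : ℝ) := by
      exact_mod_cast Nat.factorial_pos n
    have h1 : (f n / (Nat.factorial n : ℝ)) ^ 2 = (f n) ^ 2 / ((Nat.factorial n : ℝ)) ^ 2 := by
      rw [div_pow]
    have h2 : (f n) ^ 2 ≤ S * Q ^ (2 * n) := by
      have := hbound n
      have h3 : (f n) ^ 2 = |f n| ^ 2 := (sq_abs _).symm
      rw [h3]
      calc |f n| ^ 2 ≤ (M * Q ^ n) ^ 2 := by
            apply pow_le_pow_left₀ (abs_nonneg _) this
        _ = S * Q ^ (2 * n) := by rw [mul_pow, hM2, ← pow_mul, mul_comm n 2]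
    have h4 : (f n) ^ 2 ≤ S * R ^ (2 * n) := by
      calc (f n) ^ 2 ≤ S * Q ^ (2 * n) := h2
        _ ≤ S * R ^ (2 * n) := by
            apply mul_le_mul_of_nonneg_left _ hS0
            exact pow_le_pow_left₀ hQ0 hQR _
    rw [h1, hG]
    have hfact2 : (0 : ℝ) < (Nat.factorial (2 * n) : ℝ) := by
      exact_mod_cast Nat.factorial_pos (2 * n)
    have key : ((Nat.factorial n : ℝ)) ^ 2 * (2 * R) ^ (2 * n)
        ≥ R ^ (2 * n) * (Nat.factorial (2 * n) : ℝ) := by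
      have hc : (Nat.factorial (2 * n) : ℝ) ≤ 4 ^ n * ((Nat.factorial n : ℝ)) ^ 2 := by
        exact_mod_cast fact_two_mul_le' n
      have hR0 : (0 : ℝ) ≤ R := by linarith
      have hpow : (2 * R) ^ (2 * n) = 4 ^ n * R ^ (2 * n) := by
        rw [mul_pow, pow_mul]
        norm_num
      rw [hpow]
      calc R ^ (2 * n) * (Nat.factorial (2 * n) : ℝ)
          ≤ R ^ (2 * n) * (4 ^ n * ((Nat.factorial n : ℝ)) ^ 2) := by
            apply mul_le_mul_of_nonneg_left hc (by positivity)
        _ = (Nat.factorial n : ℝ) ^ 2 * (4 ^ n * R ^ (2 * n)) := by ring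
    calc (f n) ^ 2 / ((Nat.factorial n : ℝ)) ^ 2
        ≤ (S * R ^ (2 * n)) / ((Nat.factorial n : ℝ)) ^ 2 := by gcongr
      _ ≤ S * ((2 * R) ^ (2 * n) / (Nat.factorial (2 * n) : ℝ)) := by
          rw [mul_div_assoc' S _ _, div_le_div_iff₀ (by positivity) hfact2]
          calc S * R ^ (2 * n) * (Nat.factorial (2 * n) : ℝ)
              = S * (R ^ (2 * n) * (Nat.factorial (2 * n) : ℝ)) := by ring
            _ ≤ S * ((Nat.factorial n : ℝ) ^ 2 * (2 * R) ^ (2 * n)) :=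
                mul_le_mul_of_nonneg_left key hS0
            _ = S * (2 * R) ^ (2 * n) * (Nat.factorial n : ℝ) ^ 2 := by ring
  have hGnonneg : ∀ m, 0 ≤ G m := by
    intro m
    rw [hG]
    have : (0:ℝ) < Nat.factorial m := by exact_mod_cast Nat.factorial_pos m
    have hR0 : (0:ℝ) ≤ 2 * R := by linarith
    positivity
  have hsummable : Summable (fun n : ℕ => (f n / (Nat.factorial n : ℝ)) ^ 2) := by
    apply Summable.of_nonneg_of_le (fun n => sq_nonneg _) hterm
    exact hGsummable.comp_injective fun a a' h => by omega
  constructor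
  · exact hsummable
  · have h1 : ∑' n : ℕ, (f n / (Nat.factorial n : ℝ)) ^ 2 ≤ ∑' n : ℕ, G (2 * n) := by
      apply Summable.tsum_le_tsum hterm hsummable
      exact hGsummable.comp_injective fun a a' h => by omega
    have h2 : ∑' n : ℕ, G (2 * n) ≤ ∑' m : ℕ, G m := by
      exact tsum_comp_le_tsum_of_inj hGsummable hGnonneg (fun a a' h => by omega)
    have h3 : ∑' m : ℕ, G m = S * Real.exp (2 * R) := by
      rw [hG, tsum_mul_left]
      congr 1
      rw [Real.exp_eq_exp_ℝ, NormedSpace.exp_eq_tsum_div]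
    have h4 : S * Real.exp (2 * R) ≤ N * Real.exp (2 * R) * S := by
      have he : 0 < Real.exp (2 * R) := Real.exp_pos _
      nlinarith [mul_nonneg hS0 he.le]
    calc ∑' n : ℕ, (f n / (Nat.factorial n : ℝ)) ^ 2
        ≤ ∑' n : ℕ, G (2 * n) := h1
      _ ≤ ∑' m : ℕ, G m := h2
      _ = S * Real.exp (2 * R) := h3
      _ ≤ N * Real.exp (2 * R) * S := h4
end

section
/- Fix a*_1,…,a*_{H*} > 0 with ∑_k a*_k = 1 and fixed b*_1,…,b*_{H*} > 0. For a parameter w = (a_1,…,a_H, b_1,…,b_H) with a_k ≥ 0, ∑_{k=1}^{H} a_k = 1, and b_k ∈ [β₁,β₂] (0 < β₁ ≤ β₂), define K(w) = ∑_{x=0}^{∞} ( ∑_{k=1}^{H} a_k e^{−b_k} b_k^x/x! − ∑_{k=1}^{H*} a*_k e^{−b*_k} (b*_k)^x/x! )² and H'(w) = ∑_{x=0}^{H+H*−1} ( ∑_{k=1}^{H} a_k e^{−b_k} b_k^x − ∑_{k=1}^{H*} a*_k e^{−b*_k} (b*_k)^x )². Then there exist constants C_1, C_2 > 0 such that C_1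 H'(w) ≤ K(w) ≤ C_2 H'(w) for all such w. -/
open Polynomial in
lemma aux_coeff_bound {ι : Type*} (s : Finset ι) (r : ι → ℝ) (B : ℝ) (hB : 0 ≤ B)
    (hr : ∀ j ∈ s, |r j| ≤ B) (i : ℕ) :
    |(∏ j ∈ s, (X - C (r j))).coeff i| ≤ (1 + B) ^ s.card := by
  induction s using Finset.cons_induction generalizing i with
  | empty =>
    simp only [Finset.prod_empty, Finset.card_empty, pow_zero, Polynomial.coeff_one]
    split <;> simp
  | cons a s ha ih =>
    rw [Finset.prod_cons, Finset.card_cons, sub_mul, pow_succ]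
    have hra : |r a| ≤ B := hr a (Finset.mem_cons_self _ _)
    have ih' : ∀ i, |(∏ j ∈ s, (X - C (r j))).coeff i| ≤ (1 + B) ^ s.card :=
      fun i => ih (fun j hj => hr j (Finset.mem_cons_of_mem hj)) i
    have h1B : (0:ℝ) ≤ (1 + B) ^ s.card := by positivity
    rw [Polynomial.coeff_sub]
    have hC : |(C (r a) * ∏ j ∈ s, (X - C (r j))).coeff i| ≤ B * (1 + B) ^ s.card := by
      rw [Polynomial.coeff_C_mul, abs_mul]
      exact mul_le_mul hra (ih' i) (abs_nonneg _) hB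
    have hX : |(X * ∏ j ∈ s, (X - C (r j))).coeff i| ≤ (1 + B) ^ s.card := by
      cases i with
      | zero => simp [Polynomial.coeff_X_mul_zero, h1B]
      | succ n => rw [Polynomial.coeff_X_mul]; exact ih' n
    calc |(X * ∏ j ∈ s, (X - C (r j))).coeff i - (C (r a) * ∏ j ∈ s, (X - C (r j))).coeff i|
        ≤ |(X * ∏ j ∈ s, (X - C (r j))).coeff i| + |(C (r a) * ∏ j ∈ s, (X - C (r j))).coeff i| := abs_sub _ _
      _ ≤ (1 + B) ^ s.card + B * (1 + B) ^ s.card := add_le_add hX hC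
      _ = (1 + B) ^ s.card * (1 + B) := by ring

theorem statement10 (H Hstar : ℕ)
    (astar bstar : Fin Hstar → ℝ)
    (hastar : ∀ k, 0 < astar k) (hastarsum : ∑ k, astar k = 1)
    (hbstar : ∀ k, 0 < bstar k)
    (β₁ β₂ : ℝ) (hβ₁ : 0 < β₁) (hβ : β₁ ≤ β₂) :
    ∃ C₁ > (0 : ℝ), ∃ C₂ > (0 : ℝ),
      ∀ (a b : Fin H → ℝ),
        (∀ k, 0 ≤ a k) → (∑ k, a k = 1) → (∀ k, b k ∈ Set.Icc β₁ β₂) →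
        C₁ * (∑ x ∈ Finset.range (H + Hstar),
                (∑ k, a k * Real.exp (-(b k)) * b k ^ x
                  - ∑ k, astar k * Real.exp (-(bstar k)) * bstar k ^ x) ^ 2)
          ≤ (∑' x : ℕ,
              (∑ k, a k * Real.exp (-(b k)) * b k ^ x / (Nat.factorial x : ℝ)
                - ∑ k, astar k * Real.exp (-(bstar k)) * bstar k ^ x / (Nat.factorial x : ℝ)) ^ 2) ∧
        (∑' x : ℕ,
            (∑ k, a k * Real.exp (-(b k)) * b k ^ x / (Nat.factorial x : ℝ)
              - ∑ k, astar k * Real.exp (-(bstar k)) * bstar k ^ x / (Nat.factorial x : ℝ)) ^ 2)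
          ≤ C₂ * (∑ x ∈ Finset.range (H + Hstar),
                (∑ k, a k * Real.exp (-(b k)) * b k ^ x
                  - ∑ k, astar k * Real.exp (-(bstar k)) * bstar k ^ x) ^ 2) := by
  classical
  set N := H + Hstar with hNdef
  -- Hstar > 0
  have hHstar : 0 < Hstar := by
    by_contra h
    push_neg at h
    interval_cases Hstar
    simp at hastarsum
  have hN : 0 < N := by omega
  obtain ⟨N1, hN1⟩ : ∃ N1, N = N1 + 1 := ⟨N - 1, by omega⟩
  have hβ₂ : 0 < β₂ := lt_of_lt_of_le hβ₁ hβ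
  set B : ℝ := β₂ + ∑ k, bstar k with hBdef
  have hbsum : 0 ≤ ∑ k, bstar k := Finset.sum_nonneg (fun k _ => (hbstar k).le)
  have hB0 : 0 ≤ B := by positivity
  set Cp : ℝ := (1 + B) ^ N with hCpdef
  have hCp0 : 0 < Cp := by positivity
  set r : ℝ := N * Cp + 1 with hrdef
  have hr1 : 1 ≤ r := by
    have : (0:ℝ) ≤ N * Cp := by positivity
    linarith
  have hr0 : 0 < r := lt_of_lt_of_le one_pos hr1
  have hNCp : (N:ℝ) * Cp ≤ r := by simp [hrdef]
  have hsumdom : Summable (fun x : ℕ => (r ^ 2) ^ x / (Nat.factorial x : ℝ)) :=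
    Real.summable_pow_div_factorial (r ^ 2)
  have hNfact : (0:ℝ) < (N.factorial : ℝ) := by exact_mod_cast N.factorial_pos
  refine ⟨((N.factorial : ℝ) ^ 2)⁻¹, by positivity,
    ∑' x : ℕ, (r ^ 2) ^ x / (Nat.factorial x : ℝ), ?_, ?_⟩
  · have h0 : ((r ^ 2) ^ 0 / (Nat.factorial 0 : ℝ)) ≤ ∑' x : ℕ, (r ^ 2) ^ x / (Nat.factorial x : ℝ) :=
      Summable.le_tsum hsumdom 0 (fun i _ => by positivity)
    simp at h0
    linarith
  intro a b ha hasum hb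
  -- the atomic representation
  set f : ℕ → ℝ := fun x => (∑ k, a k * Real.exp (-(b k)) * b k ^ x
      - ∑ k, astar k * Real.exp (-(bstar k)) * bstar k ^ x) with hfdef
  set c : Fin N → ℝ := Fin.append (fun k => a k * Real.exp (-(b k)))
      (fun k => -(astar k * Real.exp (-(bstar k)))) with hcdef
  set μ : Fin N → ℝ := Fin.append b bstar with hμdef
  have hf : ∀ x, f x = ∑ j, c j * μ j ^ x := by
    intro x
    have h1 : ∑ j, c j * μ j ^ x
        = ∑ k : Fin H, c (Fin.castAdd Hstar k) * μ (Fin.castAdd Hstar k) ^ x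
          + ∑ k : Fin Hstar, c (Fin.natAdd H k) * μ (Fin.natAdd H k) ^ x :=
      Fin.sum_univ_add _
    rw [hfdef, h1]
    simp only [hcdef, hμdef, Fin.append_left, Fin.append_right, neg_mul]
    rw [Finset.sum_neg_distrib]
    ring
  have hμB : ∀ j, 0 ≤ μ j ∧ μ j ≤ B := by
    intro j
    rw [hμdef]
    refine Fin.addCases (fun k => ?_) (fun k => ?_) j
    · rw [Fin.append_left]
      have h1 := (hb k).1
      have h2 := (hb k).2
      constructor
      · linarith
      · rw [hBdef]; linarith
    · rw [Fin.append_right]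
      constructor
      · exact (hbstar k).le
      · have : bstar k ≤ ∑ k, bstar k :=
          Finset.single_le_sum (fun i _ => (hbstar i).le) (Finset.mem_univ k)
        rw [hBdef]; linarith
  -- the annihilating polynomial
  set p : Polynomial ℝ := ∏ j : Fin N, (Polynomial.X - Polynomial.C (μ j)) with hpdef
  have hmono : p.Monic := Polynomial.monic_prod_of_monic _ _ (fun _ _ => Polynomial.monic_X_sub_C _)
  have hdeg : p.natDegree = N := by
    rw [hpdef, Polynomial.natDegree_prod_of_monic _ _ (fun _ _ => Polynomial.monic_X_sub_C _)]
    simp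
  have heval : ∀ j, p.eval (μ j) = 0 := by
    intro j
    rw [hpdef, Polynomial.eval_prod]
    exact Finset.prod_eq_zero (Finset.mem_univ j) (by simp)
  have hcoeffN : p.coeff N = 1 := by
    have := hmono.coeff_natDegree
    rwa [hdeg] at this
  have hcoeff : ∀ i, |p.coeff i| ≤ Cp := by
    intro i
    have := aux_coeff_bound (Finset.univ : Finset (Fin N)) μ B hB0
      (fun j _ => by rw [abs_of_nonneg (hμB j).1]; exact (hμB j).2) i
    simpa [hCpdef, Finset.card_univ] using this
  -- the linear recurrence
  have hrec : ∀ m, ∑ i ∈ Finset.range (N + 1), p.coeff i * f (m + i) = 0 := by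
    intro m
    have step1 : ∑ i ∈ Finset.range (N + 1), p.coeff i * f (m + i)
        = ∑ i ∈ Finset.range (N + 1), ∑ j, p.coeff i * (c j * (μ j ^ m * μ j ^ i)) := by
      refine Finset.sum_congr rfl fun i _ => ?_
      rw [hf, Finset.mul_sum]
      refine Finset.sum_congr rfl fun j _ => ?_
      first
      | (rw [pow_add]; ring)
      | rw [pow_add]
    have step2 : ∑ j, ∑ i ∈ Finset.range (N + 1), p.coeff i * (c j * (μ j ^ m * μ j ^ i))
        = ∑ j, c j * μ j ^ m * p.eval (μ j) := by
      refine Finset.sum_congr rfl fun j _ => ?_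
      rw [Polynomial.eval_eq_sum_range, hdeg, Finset.mul_sum]
      refine Finset.sum_congr rfl fun i _ => ?_
      ring
    rw [step1, Finset.sum_comm, step2]
    apply Finset.sum_eq_zero
    intro j _
    rw [heval j, mul_zero]
  -- H' quantities
  set S : ℝ := ∑ x ∈ Finset.range N, f x ^ 2 with hSdef
  have hS0 : 0 ≤ S := Finset.sum_nonneg (fun x _ => sq_nonneg _)
  set G : ℝ := Real.sqrt S with hGdef
  have hG0 : 0 ≤ G := Real.sqrt_nonneg _
  have hG2 : G ^ 2 = S := Real.sq_sqrt hS0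
  have hbase : ∀ x < N, |f x| ≤ G := by
    intro x hx
    have h1 : f x ^ 2 ≤ S :=
      Finset.single_le_sum (fun i _ => sq_nonneg (f i)) (Finset.mem_range.mpr hx)
    rw [hGdef, ← Real.sqrt_sq_eq_abs]
    exact Real.sqrt_le_sqrt h1
  -- main growth estimate
  have hind : ∀ n, |f n| ≤ r ^ n * G := by
    intro n
    induction n using Nat.strong_induction_on with
    | _ n ih =>
      by_cases hn : n < N
      · calc |f n| ≤ G := hbase n hn
          _ = 1 * G := (one_mul G).symm
          _ ≤ r ^ n * G := by
            apply mul_le_mul_of_nonneg_right _ hG0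
            simpa using pow_le_pow_right₀ hr1 (Nat.zero_le n)
      · push_neg at hn
        obtain ⟨m, rfl⟩ : ∃ m, n = m + N := ⟨n - N, by omega⟩
        have hsplit := hrec m
        rw [Finset.sum_range_succ, hcoeffN, one_mul] at hsplit
        have hfm : f (m + N) = -∑ i ∈ Finset.range N, p.coeff i * f (m + i) := by linarith
        have habs : |f (m + N)| ≤ ∑ i ∈ Finset.range N, Cp * (r ^ (m + N1) * G) := by
          rw [hfm, abs_neg]
          refine le_trans (Finset.abs_sum_le_sum_abs _ _) ?_
          apply Finset.sum_le_sum
          intro i hi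
          rw [abs_mul]
          have hi' : i < N := Finset.mem_range.mp hi
          have h1 : |f (m + i)| ≤ r ^ (m + i) * G := ih (m + i) (by omega)
          have h2 : r ^ (m + i) ≤ r ^ (m + N1) :=
            pow_le_pow_right₀ hr1 (by omega)
          calc |p.coeff i| * |f (m + i)| ≤ Cp * (r ^ (m + i) * G) :=
              mul_le_mul (hcoeff i) h1 (abs_nonneg _) hCp0.le
            _ ≤ Cp * (r ^ (m + N1) * G) := by
              apply mul_le_mul_of_nonneg_left _ hCp0.le
              exact mul_le_mul_of_nonneg_right h2 hG0
        rw [Finset.sum_const, Finset.card_range, nsmul_eq_mul] at habs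
        calc |f (m + N)| ≤ (N : ℝ) * (Cp * (r ^ (m + N1) * G)) := habs
          _ = ((N : ℝ) * Cp) * r ^ (m + N1) * G := by ring
          _ ≤ r * r ^ (m + N1) * G := by
            apply mul_le_mul_of_nonneg_right _ hG0
            apply mul_le_mul_of_nonneg_right hNCp (by positivity)
          _ = r ^ (m + N) * G := by
            have hmn : m + N = (m + N1) + 1 := by omega
            rw [hmn, pow_succ]; ring
  -- the K summand
  set t : ℕ → ℝ := fun x => (∑ k, a k * Real.exp (-(b k)) * b k ^ x / (Nat.factorial x : ℝ)
      - ∑ k, astar k * Real.exp (-(bstar k)) * bstar k ^ x / (Nat.factorial x : ℝ)) ^ 2 with htdef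
  have htval : ∀ x, t x = f x ^ 2 / ((Nat.factorial x : ℝ)) ^ 2 := by
    intro x
    rw [htdef, hfdef]
    simp only
    rw [← Finset.sum_div, ← Finset.sum_div, ← sub_div, div_pow]
  have hfact1 : ∀ x : ℕ, (1:ℝ) ≤ (Nat.factorial x : ℝ) := by
    intro x
    exact_mod_cast Nat.one_le_iff_ne_zero.mpr (Nat.factorial_ne_zero x)
  have hq : ∀ x : ℕ, (0:ℝ) < (Nat.factorial x : ℝ) := fun x => by
    exact_mod_cast x.factorial_pos
  have ht_le : ∀ x, t x ≤ G ^ 2 * ((r ^ 2) ^ x / (Nat.factorial x : ℝ)) := by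
    intro x
    rw [htval, div_eq_mul_inv]
    have h1 : f x ^ 2 ≤ (r ^ x * G) ^ 2 := by
      rw [← sq_abs (f x)]
      exact pow_le_pow_left₀ (abs_nonneg _) (hind x) 2
    have h3 : (((Nat.factorial x : ℝ)) ^ 2)⁻¹ ≤ ((Nat.factorial x : ℝ))⁻¹ := by
      apply inv_anti₀ (hq x)
      nlinarith [hfact1 x]
    calc f x ^ 2 * (((Nat.factorial x : ℝ)) ^ 2)⁻¹
        ≤ (r ^ x * G) ^ 2 * ((Nat.factorial x : ℝ))⁻¹ :=
          mul_le_mul h1 h3 (by positivity) (by positivity)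
      _ = G ^ 2 * ((r ^ 2) ^ x / (Nat.factorial x : ℝ)) := by
          rw [div_eq_mul_inv, mul_pow, ← pow_mul, ← pow_mul]
          ring
  have ht0 : ∀ x, 0 ≤ t x := fun x => sq_nonneg _
  have hsummt : Summable t :=
    Summable.of_nonneg_of_le ht0 ht_le (hsumdom.mul_left (G ^ 2))
  constructor
  · -- lower bound
    show ((N.factorial : ℝ) ^ 2)⁻¹ * S ≤ ∑' x, t x
    have hterm : ∀ x ∈ Finset.range N, ((N.factorial : ℝ) ^ 2)⁻¹ * f x ^ 2 ≤ t x := by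
      intro x hx
      have hx' : x < N := Finset.mem_range.mp hx
      rw [htval, div_eq_mul_inv, mul_comm (f x ^ 2)]
      apply mul_le_mul_of_nonneg_right _ (sq_nonneg _)
      apply inv_anti₀ (pow_pos (hq x) 2)
      exact pow_le_pow_left₀ (hq x).le
        (by exact_mod_cast Nat.factorial_le hx'.le) 2
    calc ((N.factorial : ℝ) ^ 2)⁻¹ * S = ∑ x ∈ Finset.range N, ((N.factorial : ℝ) ^ 2)⁻¹ * f x ^ 2 := by
          rw [hSdef, Finset.mul_sum]
      _ ≤ ∑ x ∈ Finset.range N, t x := Finset.sum_le_sum hterm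
      _ ≤ ∑' x, t x := Summable.sum_le_tsum _ (fun i _ => ht0 i) hsummt
  · -- upper bound
    show (∑' x, t x) ≤ (∑' x : ℕ, (r ^ 2) ^ x / (Nat.factorial x : ℝ)) * S
    calc ∑' x, t x ≤ ∑' x, G ^ 2 * ((r ^ 2) ^ x / (Nat.factorial x : ℝ)) :=
          Summable.tsum_le_tsum ht_le hsummt (hsumdom.mul_left (G ^ 2))
      _ = G ^ 2 * ∑' x, (r ^ 2) ^ x / (Nat.factorial x : ℝ) := tsum_mul_left
      _ = (∑' x : ℕ, (r ^ 2) ^ x / (Nat.factorial x : ℝ)) * S := by rw [hG2]; ring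
end

section
/- Let a_1,…,a_H, a*_1,…,a*_{H*} ∈ ℝ and b_1,…,b_H, b*_1,…,b*_{H*} ∈ ℝ_{>0}. Define f_n := ∑_{k=1}^{H} a_k b_k^n − ∑_{k=1}^{H*} a*_k (b*_k)^n and g_n := ∑_{k=1}^{H} a_k b_k^n e^{−b_k} − ∑_{k=1}^{H*} a*_k (b*_k)^n e^{−b*_k} for n ∈ ℤ_{≥0}. Then for every n ∈ ℤ_{≥0}, the series ∑_{j=n}^{∞} g_j/(j−n)! converges and f_n = ∑_{j=n}^{∞} g_j/(j−n)!. -/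
lemma aux_term (a b : ℝ) (n : ℕ) :
    Summable (fun s : ℕ => a * b ^ (n + s) * Real.exp (-b) / s.factorial) ∧
    (∑' s : ℕ, a * b ^ (n + s) * Real.exp (-b) / s.factorial) = a * b ^ n := by
  have heq : (fun s : ℕ => a * b ^ (n + s) * Real.exp (-b) / s.factorial)
      = fun s : ℕ => (a * b ^ n * Real.exp (-b)) * (b ^ s / s.factorial) := by
    funext s; rw [pow_add]; ring
  rw [heq]
  constructor
  · exact (Real.summable_pow_div_factorial b).mul_left _
  · have hexp : (∑' s : ℕ, b ^ s / s.factorial) = Real.exp b := by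
      rw [Real.exp_eq_exp_ℝ, NormedSpace.exp_eq_tsum_div]
    rw [tsum_mul_left, hexp, mul_assoc, ← Real.exp_add]
    simp

theorem statement13 (H Hstar : ℕ)
    (a : Fin H → ℝ) (astar : Fin Hstar → ℝ)
    (b : Fin H → ℝ) (bstar : Fin Hstar → ℝ)
    (hb : ∀ k, 0 < b k) (hbstar : ∀ k, 0 < bstar k) :
    ∀ n : ℕ,
      Summable (fun s : ℕ =>
        (∑ k, a k * b k ^ (n + s) * Real.exp (-(b k))
          - ∑ k, astar k * bstar k ^ (n + s) * Real.exp (-(bstar k))) /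
          (Nat.factorial s : ℝ)) ∧
      (∑ k, a k * b k ^ n - ∑ k, astar k * bstar k ^ n)
        = ∑' s : ℕ,
            (∑ k, a k * b k ^ (n + s) * Real.exp (-(b k))
              - ∑ k, astar k * bstar k ^ (n + s) * Real.exp (-(bstar k))) /
              (Nat.factorial s : ℝ) := by
  intro n
  have heq : (fun s : ℕ =>
      (∑ k, a k * b k ^ (n + s) * Real.exp (-(b k))
        - ∑ k, astar k * bstar k ^ (n + s) * Real.exp (-(bstar k))) /
        (Nat.factorial s : ℝ))
      = fun s : ℕ =>
        (∑ k, a k * b k ^ (n + s) * Real.exp (-(b k)) / s.factorial)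
        - (∑ k, astar k * bstar k ^ (n + s) * Real.exp (-(bstar k)) / s.factorial) := by
    funext s; rw [sub_div, Finset.sum_div, Finset.sum_div]
  have hA : Summable (fun s : ℕ => ∑ k, a k * b k ^ (n + s) * Real.exp (-(b k)) / s.factorial) :=
    summable_sum fun k _ => (aux_term (a k) (b k) n).1
  have hB : Summable (fun s : ℕ =>
      ∑ k, astar k * bstar k ^ (n + s) * Real.exp (-(bstar k)) / s.factorial) :=
    summable_sum fun k _ => (aux_term (astar k) (bstar k) n).1
  rw [heq]
  refine ⟨hA.sub hB, ?_⟩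
  rw [Summable.tsum_sub hA hB, Summable.tsum_finsetSum (fun k _ => (aux_term (a k) (b k) n).1),
    Summable.tsum_finsetSum (fun k _ => (aux_term (astar k) (bstar k) n).1)]
  congr 1 <;> exact Finset.sum_congr rfl fun k _ => ((aux_term _ _ n).2).symm
end

section
/- Let s_1,…,s_H ∈ (ℝ_{>0})^M be pairwise distinct vectors and let c = (c_1,…,c_H) ∈ ℝ^H. If ∑_{k=1}^{H} c_k ∏_{m=1}^{M} s_{k,m}^{x_m} = 0 for every multi-index x ∈ (ℤ_{≥0})^M, then c_k = 0 for all k ∈ {1,…,H}. -/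
theorem statement16 (H M : ℕ) (s : Fin H → Fin M → ℝ)
    (hpos : ∀ k m, 0 < s k m) (hdist : Function.Injective s)
    (c : Fin H → ℝ)
    (hzero : ∀ x : Fin M → ℕ, ∑ k, c k * ∏ m, s k m ^ (x m) = 0) :
    ∀ k, c k = 0 := by
  classical
  set f : Fin H → (Multiplicative (Fin M → ℕ) →* ℝ) := fun k =>
    { toFun := fun x => ∏ m, s k m ^ (Multiplicative.toAdd x m)
      map_one' := by simp
      map_mul' := by
        intro x y
        simp [pow_add, Finset.prod_mul_distrib] } with hf
  have hfinj : Function.Injective f := by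
    intro k k' h
    apply hdist
    funext m
    have := congrFun (congrArg (fun g : Multiplicative (Fin M → ℕ) →* ℝ => g.toFun)
      h) (Multiplicative.ofAdd (Pi.single m 1))
    simpa [hf, Pi.single_apply, pow_ite, Finset.prod_ite_eq'] using this
  have hli : LinearIndependent ℝ (fun k => (f k : Multiplicative (Fin M → ℕ) → ℝ)) :=
    (linearIndependent_monoidHom (Multiplicative (Fin M → ℕ)) ℝ).comp f hfinj
  have := Fintype.linearIndependent_iff.mp hli c ?_
  · exact this
  · funext x
    simpa [hf] using hzero (Multiplicative.toAdd x)
end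

section
/- Let a_1,…,a_H ≥ 0 with ∑_{k=1}^{H} a_k = 1, let b_1,…,b_H ∈ (ℝ_{>0})^M, let a*_1,…,a*_{H*} > 0 with ∑_{i=1}^{H*} a*_i = 1, and let b*_1,…,b*_{H*} ∈ (ℝ_{>0})^M be pairwise distinct. Define Inv_i := { k ∈ {1,…,H} : b_k = b*_i } for i ∈ {1,…,H*} and Inv_0 := {1,…,H} \ ⋃_{i=1}^{H*} Inv_i. Then ∑_{k=1}^{H} a_k b_k^{x} = ∑_{i=1}^{H*} a*_i (b*_i)^{x} holds for every x ∈ (ℤ_{≥0})^M if and only if for every i ∈ {1,…,H*} one has Inv_i ≠ ∅ and ∑_{k ∈ Inv_i} a_k = a*_i, and a_k = 0 for every k ∈ Inv_0. -/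
open scoped Classical
open Finset

/-- The multiplicative character `x ↦ ∏ m, β m ^ x m` on `Multiplicative (Fin M → ℕ)`. -/
noncomputable def expChar (M : ℕ) (β : Fin M → ℝ) : Multiplicative (Fin M → ℕ) →* ℝ where
  toFun x := ∏ m, β m ^ (Multiplicative.toAdd x m)
  map_one' := by simp
  map_mul' x y := by
    simp [pow_add, Finset.prod_mul_distrib]

lemma expChar_single (M : ℕ) (β : Fin M → ℝ) (m : Fin M) :
    expChar M β (Multiplicative.ofAdd (Pi.single m 1)) = β m := by
  simp only [expChar, MonoidHom.coe_mk, OneHom.coe_mk, toAdd_ofAdd]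
  rw [Finset.prod_eq_single m]
  · simp
  · intro m' _ hm'
    rw [Pi.single_eq_of_ne hm', pow_zero]
  · intro h; exact absurd (Finset.mem_univ m) h

lemma key_indep {M : ℕ} (T : Finset (Fin M → ℝ)) (hT : ∀ β ∈ T, ∀ m, 0 < β m)
    (f : (Fin M → ℝ) → ℝ)
    (h : ∀ x : Fin M → ℕ, ∑ β ∈ T, f β * ∏ m, β m ^ x m = 0) :
    ∀ β ∈ T, f β = 0 := by
  have hinj : Function.Injective (fun β : ↥T => expChar M (β : Fin M → ℝ)) := by
    intro β γ hβγ
    apply Subtype.ext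
    funext m
    have := congrArg (fun χ : Multiplicative (Fin M → ℕ) →* ℝ =>
      χ (Multiplicative.ofAdd (Pi.single m 1))) hβγ
    simpa [expChar_single] using this
  have li := (linearIndependent_monoidHom (Multiplicative (Fin M → ℕ)) ℝ).comp
      (fun β : ↥T => expChar M (β : Fin M → ℝ)) hinj
  have hz : ∑ β : ↥T, (f β) • ((fun g : Multiplicative (Fin M → ℕ) →* ℝ => (g : Multiplicative (Fin M → ℕ) → ℝ)) ∘ (fun β : ↥T => expChar M (β : Fin M → ℝ))) β = 0 := by
    funext x
    have := h (Multiplicative.toAdd x)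
    rw [← Finset.sum_attach T (fun β => f β * ∏ m, β m ^ (Multiplicative.toAdd x) m)] at this
    simpa [Function.comp, expChar, Finset.sum_apply] using this
  intro β hβ
  exact Fintype.linearIndependent_iff.mp li (fun β : ↥T => f β) hz ⟨β, hβ⟩

theorem statement17 (M H Hstar : ℕ)
    (a : Fin H → ℝ) (b : Fin H → Fin M → ℝ)
    (astar : Fin Hstar → ℝ) (bstar : Fin Hstar → Fin M → ℝ)
    (ha : ∀ k, 0 ≤ a k) (hasum : ∑ k, a k = 1)
    (hb : ∀ k m, 0 < b k m)
    (hastar : ∀ i, 0 < astar i) (hastarsum : ∑ i, astar i = 1)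
    (hbstar : ∀ i m, 0 < bstar i m)
    (hdist : Function.Injective bstar) :
    (∀ x : Fin M → ℕ,
        ∑ k, a k * ∏ m, b k m ^ (x m) = ∑ i, astar i * ∏ m, bstar i m ^ (x m))
      ↔ ((∀ i, (Finset.univ.filter (fun k => b k = bstar i)).Nonempty ∧
              ∑ k ∈ Finset.univ.filter (fun k => b k = bstar i), a k = astar i) ∧
         (∀ k, (∀ i, b k ≠ bstar i) → a k = 0)) := by
  constructor
  · intro h
    set T : Finset (Fin M → ℝ) :=
      (Finset.image b Finset.univ) ∪ (Finset.image bstar Finset.univ) with hT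
    have hTpos : ∀ β ∈ T, ∀ m, 0 < β m := by
      intro β hβ m
      rcases Finset.mem_union.mp hβ with hβ | hβ
      · obtain ⟨k, _, rfl⟩ := Finset.mem_image.mp hβ; exact hb k m
      · obtain ⟨i, _, rfl⟩ := Finset.mem_image.mp hβ; exact hbstar i m
    set F : (Fin M → ℝ) → ℝ := fun β =>
      (∑ k ∈ Finset.univ.filter (fun k => b k = β), a k)
        - (∑ i ∈ Finset.univ.filter (fun i => bstar i = β), astar i) with hF
    have h1 : ∀ x : Fin M → ℕ,
        ∑ β ∈ T, (∑ k ∈ Finset.univ.filter (fun k => b k = β), a k) * ∏ m, β m ^ x m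
          = ∑ k, a k * ∏ m, b k m ^ x m := by
      intro x
      rw [← Finset.sum_fiberwise_of_maps_to (g := b)
        (fun k _ => Finset.mem_union_left _ (Finset.mem_image_of_mem b (Finset.mem_univ k)))
        (fun k => a k * ∏ m, b k m ^ x m)]
      refine Finset.sum_congr rfl fun β _ => ?_
      rw [Finset.sum_mul]
      refine Finset.sum_congr rfl fun k hk => ?_
      rw [(Finset.mem_filter.mp hk).2]
    have h2 : ∀ x : Fin M → ℕ,
        ∑ β ∈ T, (∑ i ∈ Finset.univ.filter (fun i => bstar i = β), astar i) * ∏ m, β m ^ x m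
          = ∑ i, astar i * ∏ m, bstar i m ^ x m := by
      intro x
      rw [← Finset.sum_fiberwise_of_maps_to (g := bstar)
        (fun i _ => Finset.mem_union_right _ (Finset.mem_image_of_mem bstar (Finset.mem_univ i)))
        (fun i => astar i * ∏ m, bstar i m ^ x m)]
      refine Finset.sum_congr rfl fun β _ => ?_
      rw [Finset.sum_mul]
      refine Finset.sum_congr rfl fun i hi => ?_
      rw [(Finset.mem_filter.mp hi).2]
    have hzero : ∀ x : Fin M → ℕ, ∑ β ∈ T, F β * ∏ m, β m ^ x m = 0 := by
      intro x
      simp only [hF, sub_mul, Finset.sum_sub_distrib]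
      rw [h1 x, h2 x, h x, sub_self]
    have hFz := key_indep T hTpos F hzero
    constructor
    · intro i
      have hmem : bstar i ∈ T :=
        Finset.mem_union_right _ (Finset.mem_image_of_mem bstar (Finset.mem_univ i))
      have hfi : Finset.univ.filter (fun j => bstar j = bstar i) = {i} := by
        ext j
        simp [hdist.eq_iff]
      have h0 := hFz _ hmem
      rw [hF] at h0
      simp only [hfi, Finset.sum_singleton, sub_eq_zero] at h0
      refine ⟨?_, h0⟩
      by_contra hne
      rw [Finset.not_nonempty_iff_eq_empty] at hne
      rw [hne, Finset.sum_empty] at h0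
      exact absurd h0.symm (ne_of_gt (hastar i))
    · intro k hk
      have hmem : b k ∈ T :=
        Finset.mem_union_left _ (Finset.mem_image_of_mem b (Finset.mem_univ k))
      have hfe : Finset.univ.filter (fun i => bstar i = b k) = ∅ := by
        ext i
        simp only [Finset.mem_filter, Finset.mem_univ, true_and, Finset.notMem_empty, iff_false]
        exact fun hik => hk i hik.symm
      have h0 := hFz _ hmem
      rw [hF] at h0
      simp only [hfe, Finset.sum_empty, sub_zero] at h0
      have := (Finset.sum_eq_zero_iff_of_nonneg (fun j _ => ha j)).mp h0 k
        (Finset.mem_filter.mpr ⟨Finset.mem_univ k, rfl⟩)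
      exact this
  · rintro ⟨h1, h2⟩ x
    have hfib : ∀ i, ∑ k ∈ Finset.univ.filter (fun k => b k = bstar i),
        a k * ∏ m, b k m ^ x m = astar i * ∏ m, bstar i m ^ x m := by
      intro i
      rw [← (h1 i).2, Finset.sum_mul]
      refine Finset.sum_congr rfl fun k hk => ?_
      rw [(Finset.mem_filter.mp hk).2]
    have hdisj : Set.PairwiseDisjoint (↑(Finset.univ : Finset (Fin Hstar)))
        (fun i => Finset.univ.filter (fun k => b k = bstar i)) := by
      intro i _ j _ hij
      simp only [Function.onFun]
      rw [Finset.disjoint_left]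
      intro k hki hkj
      exact hij (hdist (((Finset.mem_filter.mp hki).2.symm.trans
        (Finset.mem_filter.mp hkj).2)))
    calc ∑ k, a k * ∏ m, b k m ^ x m
        = ∑ k ∈ (Finset.univ.biUnion fun i => Finset.univ.filter (fun k => b k = bstar i)),
            a k * ∏ m, b k m ^ x m := by
          symm
          apply Finset.sum_subset (Finset.subset_univ _)
          intro k _ hk
          have hne : ∀ i, b k ≠ bstar i := by
            intro i hi
            exact hk (Finset.mem_biUnion.mpr ⟨i, Finset.mem_univ i,
              Finset.mem_filter.mpr ⟨Finset.mem_univ k, hi⟩⟩)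
          rw [h2 k hne, zero_mul]
      _ = ∑ i, ∑ k ∈ Finset.univ.filter (fun k => b k = bstar i),
            a k * ∏ m, b k m ^ x m := Finset.sum_biUnion hdisj
      _ = ∑ i, astar i * ∏ m, bstar i m ^ x m := Finset.sum_congr rfl fun i _ => hfib i
end

section
/- Fix a* > 0 and b* > 0. Define, for a parameter w = (a_1,…,a_H, b_1,…,b_H) with a_i ≥ 0 and b_i > 0, F(w) := ∑_{x=0}^{H} ( ∑_{i=1}^{H} a_i b_i^{x} − a^* (b^*)^{x} )² and G(w) := ( ∑_{i=1}^{H} a_i − a^* )² + ∑_{i=1}^{H} ( a_i (b_i − b^*)² )² + ( ∑_{i=1}^{H} a_i (b_i − b^*) )². Then there exist an open neighborhood U of the set { w : ∑_i a_i = a^*, b_1 = ⋯ = b_H = b^* } and constants C_1, C_2 > 0 such that C_1 G(w) ≤ F(w) ≤ C_2 G(w) for all w ∈ U with a_i ≥ 0 and b_i > 0. -/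
noncomputable def auxK (b : ℝ) : ℕ → ℝ
  | 0 => 0
  | (x + 1) => 2 * b * auxK b x + x * b ^ (x - 1)

lemma auxK_nonneg {b : ℝ} (hb : 0 < b) : ∀ x, 0 ≤ auxK b x
  | 0 => le_refl 0
  | (x + 1) => by
      have h1 := auxK_nonneg hb x
      have h2 : (0:ℝ) ≤ (x:ℝ) * b ^ (x - 1) := by positivity
      have h3 : (0:ℝ) ≤ 2 * b * auxK b x := by positivity
      simpa [auxK] using add_nonneg h3 h2

lemma auxK_bound {b : ℝ} (hb : 0 < b) {t : ℝ} (ht : |t| ≤ 2 * b) :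
    ∀ x : ℕ, |t ^ x - b ^ x - x * b ^ (x - 1) * (t - b)| ≤ auxK b x * (t - b) ^ 2
  | 0 => by simp [auxK]
  | 1 => by norm_num [auxK]
  | (y + 2) => by
      have ih := auxK_bound hb ht (y + 1)
      have key : t ^ (y + 2) - b ^ (y + 2) - ((y + 2 : ℕ) : ℝ) * b ^ ((y + 2) - 1) * (t - b)
          = t * (t ^ (y + 1) - b ^ (y + 1) - ((y + 1 : ℕ) : ℝ) * b ^ ((y + 1) - 1) * (t - b))
            + ((y + 1 : ℕ) : ℝ) * b ^ y * (t - b) ^ 2 := by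
        simp only [Nat.add_sub_cancel]
        push_cast
        ring
      have hK : auxK b (y + 2) = 2 * b * auxK b (y + 1) + ((y + 1 : ℕ) : ℝ) * b ^ y := by
        simp [auxK]
      rw [key, hK]
      have h1 : |t * (t ^ (y + 1) - b ^ (y + 1) - ((y + 1 : ℕ) : ℝ) * b ^ ((y + 1) - 1) * (t - b))|
          ≤ 2 * b * (auxK b (y + 1) * (t - b) ^ 2) := by
        rw [abs_mul]
        apply mul_le_mul ht ih (abs_nonneg _) (by positivity)
      have h2 : |((y + 1 : ℕ) : ℝ) * b ^ y * (t - b) ^ 2| = ((y + 1 : ℕ) : ℝ) * b ^ y * (t - b) ^ 2 := by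
        apply abs_of_nonneg; positivity
      calc |_ + _| ≤ _ + _ := abs_add_le _ _
        _ ≤ 2 * b * (auxK b (y + 1) * (t - b) ^ 2) + ((y + 1 : ℕ) : ℝ) * b ^ y * (t - b) ^ 2 := by
            rw [h2]; exact add_le_add h1 le_rfl
        _ = (2 * b * auxK b (y + 1) + ((y + 1 : ℕ) : ℝ) * b ^ y) * (t - b) ^ 2 := by ring

lemma upperB (H : ℕ) (astar bstar : ℝ) (hbstar : 0 < bstar) (a b : Fin H → ℝ)
    (ha : ∀ i, 0 ≤ a i) (hbr : ∀ i, |b i - bstar| ≤ bstar) :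
    (∑ x ∈ Finset.range (H + 1), ((∑ i, a i * b i ^ x) - astar * bstar ^ x) ^ 2)
      ≤ (1 + ∑ x ∈ Finset.range (H + 1),
            3 * ((bstar ^ x) ^ 2 + ((x : ℝ) * bstar ^ (x - 1)) ^ 2 + auxK bstar x ^ 2 * H))
        * (((∑ i, a i) - astar) ^ 2 + (∑ i, (a i * (b i - bstar) ^ 2) ^ 2)
            + (∑ i, a i * (b i - bstar)) ^ 2) := by
  have hbabs : ∀ i, |b i| ≤ 2 * bstar := by
    intro i
    have h2 := abs_le.mp (hbr i)
    rw [abs_le]; constructor <;> linarith [h2.1, h2.2]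
  have hvnn : (0:ℝ) ≤ ∑ i, a i * (b i - bstar) ^ 2 :=
    Finset.sum_nonneg fun i _ => mul_nonneg (ha i) (sq_nonneg _)
  have hTnn : (0:ℝ) ≤ ∑ i, (a i * (b i - bstar) ^ 2) ^ 2 :=
    Finset.sum_nonneg fun i _ => sq_nonneg _
  have hGnn : (0:ℝ) ≤ ((∑ i, a i) - astar) ^ 2 + (∑ i, (a i * (b i - bstar) ^ 2) ^ 2)
      + (∑ i, a i * (b i - bstar)) ^ 2 := by positivity
  have hv2 : (∑ i, a i * (b i - bstar) ^ 2) ^ 2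
      ≤ (H:ℝ) * ∑ i, (a i * (b i - bstar) ^ 2) ^ 2 := by
    have h := sq_sum_le_card_mul_sum_sq (s := (Finset.univ : Finset (Fin H)))
      (f := fun i => a i * (b i - bstar) ^ 2)
    simpa using h
  have hstep : ∀ x ∈ Finset.range (H + 1),
      ((∑ i, a i * b i ^ x) - astar * bstar ^ x) ^ 2
        ≤ 3 * ((bstar ^ x) ^ 2 + ((x : ℝ) * bstar ^ (x - 1)) ^ 2 + auxK bstar x ^ 2 * H)
          * (((∑ i, a i) - astar) ^ 2 + (∑ i, (a i * (b i - bstar) ^ 2) ^ 2)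
            + (∑ i, a i * (b i - bstar)) ^ 2) := by
    intro x _
    have hrho : |∑ i, a i * (b i ^ x - bstar ^ x - (x:ℝ) * bstar ^ (x-1) * (b i - bstar))|
        ≤ auxK bstar x * ∑ i, a i * (b i - bstar) ^ 2 := by
      calc |∑ i, a i * (b i ^ x - bstar ^ x - (x:ℝ) * bstar ^ (x-1) * (b i - bstar))|
          ≤ ∑ i, |a i * (b i ^ x - bstar ^ x - (x:ℝ) * bstar ^ (x-1) * (b i - bstar))| :=
            Finset.abs_sum_le_sum_abs _ _
        _ ≤ ∑ i, a i * (auxK bstar x * (b i - bstar) ^ 2) := by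
            refine Finset.sum_le_sum fun i _ => ?_
            rw [abs_mul, abs_of_nonneg (ha i)]
            exact mul_le_mul_of_nonneg_left (auxK_bound hbstar (hbabs i) x) (ha i)
        _ = auxK bstar x * ∑ i, a i * (b i - bstar) ^ 2 := by
            rw [Finset.mul_sum]; exact Finset.sum_congr rfl fun i _ => by ring
    have hex : (∑ i, a i * b i ^ x) - astar * bstar ^ x
        = bstar ^ x * ((∑ i, a i) - astar)
          + ((x:ℝ) * bstar ^ (x-1)) * (∑ i, a i * (b i - bstar))
          + ∑ i, a i * (b i ^ x - bstar ^ x - (x:ℝ) * bstar ^ (x-1) * (b i - bstar)) := by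
      have h1 : (∑ i, a i * (b i ^ x - bstar ^ x - (x:ℝ) * bstar ^ (x-1) * (b i - bstar)))
          = (∑ i, a i * b i ^ x) - (∑ i, a i) * bstar ^ x
            - ((x:ℝ) * bstar ^ (x-1)) * (∑ i, a i * (b i - bstar)) := by
        rw [Finset.sum_congr rfl fun i _ => (by ring :
            a i * (b i ^ x - bstar ^ x - (x:ℝ) * bstar ^ (x-1) * (b i - bstar))
              = a i * b i ^ x - a i * bstar ^ x
                - (x:ℝ) * bstar ^ (x-1) * (a i * (b i - bstar))),
          Finset.sum_sub_distrib, Finset.sum_sub_distrib, ← Finset.sum_mul, ← Finset.mul_sum]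
      rw [h1]; ring
    have hρ2 : (∑ i, a i * (b i ^ x - bstar ^ x - (x:ℝ) * bstar ^ (x-1) * (b i - bstar))) ^ 2
        ≤ (auxK bstar x) ^ 2 * (∑ i, a i * (b i - bstar) ^ 2) ^ 2 := by
      have h3 := mul_self_le_mul_self
        (abs_nonneg (∑ i, a i * (b i ^ x - bstar ^ x - (x:ℝ) * bstar ^ (x-1) * (b i - bstar)))) hrho
      rw [abs_mul_abs_self] at h3
      nlinarith [h3]
    rw [hex]
    nlinarith [hρ2, mul_le_mul_of_nonneg_left hv2 (sq_nonneg (auxK bstar x)),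
      sq_nonneg (bstar ^ x * ((∑ i, a i) - astar)
        - ((x:ℝ) * bstar ^ (x-1)) * (∑ i, a i * (b i - bstar))),
      sq_nonneg (bstar ^ x * ((∑ i, a i) - astar)
        - ∑ i, a i * (b i ^ x - bstar ^ x - (x:ℝ) * bstar ^ (x-1) * (b i - bstar))),
      sq_nonneg (((x:ℝ) * bstar ^ (x-1)) * (∑ i, a i * (b i - bstar))
        - ∑ i, a i * (b i ^ x - bstar ^ x - (x:ℝ) * bstar ^ (x-1) * (b i - bstar))),
      mul_nonneg (sq_nonneg (bstar ^ x)) hTnn,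
      mul_nonneg (sq_nonneg (bstar ^ x)) (sq_nonneg (∑ i, a i * (b i - bstar))),
      mul_nonneg (sq_nonneg ((x:ℝ) * bstar ^ (x-1))) (sq_nonneg ((∑ i, a i) - astar)),
      mul_nonneg (sq_nonneg ((x:ℝ) * bstar ^ (x-1))) hTnn,
      mul_nonneg (mul_nonneg (sq_nonneg (auxK bstar x)) (Nat.cast_nonneg (α := ℝ) H))
        (sq_nonneg ((∑ i, a i) - astar)),
      mul_nonneg (mul_nonneg (sq_nonneg (auxK bstar x)) (Nat.cast_nonneg (α := ℝ) H))
        (sq_nonneg (∑ i, a i * (b i - bstar)))]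
  calc (∑ x ∈ Finset.range (H + 1), ((∑ i, a i * b i ^ x) - astar * bstar ^ x) ^ 2)
      ≤ ∑ x ∈ Finset.range (H + 1),
          3 * ((bstar ^ x) ^ 2 + ((x : ℝ) * bstar ^ (x - 1)) ^ 2 + auxK bstar x ^ 2 * H)
          * (((∑ i, a i) - astar) ^ 2 + (∑ i, (a i * (b i - bstar) ^ 2) ^ 2)
            + (∑ i, a i * (b i - bstar)) ^ 2) := Finset.sum_le_sum hstep
    _ = (∑ x ∈ Finset.range (H + 1),
          3 * ((bstar ^ x) ^ 2 + ((x : ℝ) * bstar ^ (x - 1)) ^ 2 + auxK bstar x ^ 2 * H))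
          * (((∑ i, a i) - astar) ^ 2 + (∑ i, (a i * (b i - bstar) ^ 2) ^ 2)
            + (∑ i, a i * (b i - bstar)) ^ 2) := by rw [← Finset.sum_mul]
    _ ≤ _ := by
        refine mul_le_mul_of_nonneg_right ?_ hGnn
        linarith

lemma lowerB (H : ℕ) (astar bstar : ℝ) (hbstar : 0 < bstar) (a b : Fin H → ℝ)
    (ha : ∀ i, 0 ≤ a i) (hbr : ∀ i, |b i - bstar| ≤ 1) :
    ((∑ i, a i) - astar) ^ 2 + (∑ i, (a i * (b i - bstar) ^ 2) ^ 2)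
      + (∑ i, a i * (b i - bstar)) ^ 2
    ≤ (6 + 14 * bstar ^ 2 + 3 * bstar ^ 4)
      * ∑ x ∈ Finset.range (H + 1), ((∑ i, a i * b i ^ x) - astar * bstar ^ x) ^ 2 := by
  have hFnn : (0:ℝ) ≤ ∑ x ∈ Finset.range (H + 1),
      ((∑ i, a i * b i ^ x) - astar * bstar ^ x) ^ 2 :=
    Finset.sum_nonneg fun x _ => sq_nonneg _
  have hE0 : ((∑ i, a i) - astar) ^ 2 ≤ ∑ x ∈ Finset.range (H + 1),
      ((∑ i, a i * b i ^ x) - astar * bstar ^ x) ^ 2 := by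
    have h := Finset.single_le_sum
      (f := fun x => ((∑ i, a i * b i ^ x) - astar * bstar ^ x) ^ 2)
      (fun x _ => sq_nonneg _) (Finset.mem_range.mpr (by omega : 0 < H + 1))
    simpa using h
  have hy : ∀ i, 0 ≤ a i * (b i - bstar) ^ 2 := fun i => mul_nonneg (ha i) (sq_nonneg _)
  have hTv : (∑ i, (a i * (b i - bstar) ^ 2) ^ 2) ≤ (∑ i, a i * (b i - bstar) ^ 2) ^ 2 := by
    calc ∑ i, (a i * (b i - bstar) ^ 2) ^ 2
        ≤ ∑ i, (a i * (b i - bstar) ^ 2) * (∑ j, a j * (b j - bstar) ^ 2) := by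
          refine Finset.sum_le_sum fun i _ => ?_
          rw [sq]
          exact mul_le_mul_of_nonneg_left
            (Finset.single_le_sum (fun j _ => hy j) (Finset.mem_univ i)) (hy i)
      _ = (∑ i, a i * (b i - bstar) ^ 2) ^ 2 := by rw [← Finset.sum_mul, sq]
  have hu : (∑ i, a i * (b i - bstar)) = (∑ i, a i * b i) - bstar * ∑ i, a i :=
    calc (∑ i, a i * (b i - bstar)) = ∑ i, (a i * b i - bstar * a i) :=
        Finset.sum_congr rfl fun i _ => by ring
      _ = (∑ i, a i * b i) - bstar * ∑ i, a i := by
          rw [Finset.sum_sub_distrib, ← Finset.mul_sum]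
  rcases (by omega : H = 0 ∨ H = 1 ∨ 2 ≤ H) with hH | hH | hH
  · subst hH
    simp only [Finset.univ_eq_empty, Finset.sum_empty, Finset.sum_range_one, pow_zero,
      mul_one] at *
    nlinarith [hE0, hFnn, mul_nonneg (sq_nonneg bstar) hFnn,
      mul_nonneg (sq_nonneg (bstar ^ 2)) hFnn]
  · subst hH
    have hE1 : ((∑ i, a i * b i) - astar * bstar) ^ 2 ≤ ∑ x ∈ Finset.range (1 + 1),
        ((∑ i, a i * b i ^ x) - astar * bstar ^ x) ^ 2 := by
      have h := Finset.single_le_sum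
        (f := fun x => ((∑ i, a i * b i ^ x) - astar * bstar ^ x) ^ 2)
        (fun x _ => sq_nonneg _) (Finset.mem_range.mpr (by omega : 1 < 1 + 1))
      simpa using h
    have hb2 : (b 0 - bstar) ^ 2 ≤ 1 := by
      have h := abs_le.mp (hbr 0)
      nlinarith [h.1, h.2]
    have hA : (∑ i, a i) = a 0 := Fin.sum_univ_one a
    have hB : (∑ i, a i * b i) = a 0 * b 0 := Fin.sum_univ_one _
    have hT : (∑ i, (a i * (b i - bstar) ^ 2) ^ 2) = (a 0 * (b 0 - bstar) ^ 2) ^ 2 :=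
      Fin.sum_univ_one _
    have hU : (∑ i, a i * (b i - bstar)) = a 0 * (b 0 - bstar) := Fin.sum_univ_one _
    rw [hA, hT, hU]
    rw [hA] at hE0; rw [hB] at hE1
    nlinarith [hE0, hE1, hb2,
      mul_nonneg (sq_nonneg (a 0 * (b 0 - bstar))) (sub_nonneg.mpr hb2),
      sq_nonneg (a 0 * b 0 - astar * bstar + bstar * (a 0 - astar)),
      sq_nonneg (a 0 - astar), sq_nonneg (a 0 * b 0 - astar * bstar),
      mul_nonneg (sq_nonneg bstar) (sq_nonneg (a 0 - astar)),
      mul_nonneg (sq_nonneg (bstar ^ 2)) (sq_nonneg (a 0 - astar)),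
      mul_nonneg (sq_nonneg bstar) (sq_nonneg (a 0 * b 0 - astar * bstar)),
      mul_nonneg (sq_nonneg (bstar ^ 2)) (sq_nonneg (a 0 * b 0 - astar * bstar)),
      hFnn, mul_nonneg (sq_nonneg bstar) hFnn]
  · have hE1 : ((∑ i, a i * b i) - astar * bstar) ^ 2 ≤ ∑ x ∈ Finset.range (H + 1),
        ((∑ i, a i * b i ^ x) - astar * bstar ^ x) ^ 2 := by
      have h := Finset.single_le_sum
        (f := fun x => ((∑ i, a i * b i ^ x) - astar * bstar ^ x) ^ 2)
        (fun x _ => sq_nonneg _) (Finset.mem_range.mpr (by omega : 1 < H + 1))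
      simpa using h
    have hE2 : ((∑ i, a i * b i ^ 2) - astar * bstar ^ 2) ^ 2 ≤ ∑ x ∈ Finset.range (H + 1),
        ((∑ i, a i * b i ^ x) - astar * bstar ^ x) ^ 2 := by
      have h := Finset.single_le_sum
        (f := fun x => ((∑ i, a i * b i ^ x) - astar * bstar ^ x) ^ 2)
        (fun x _ => sq_nonneg _) (Finset.mem_range.mpr (by omega : 2 < H + 1))
      simpa using h
    have hv : (∑ i, a i * (b i - bstar) ^ 2)
        = (∑ i, a i * b i ^ 2) - 2 * bstar * (∑ i, a i * b i) + bstar ^ 2 * ∑ i, a i :=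
      calc (∑ i, a i * (b i - bstar) ^ 2)
          = ∑ i, (a i * b i ^ 2 - 2 * bstar * (a i * b i) + bstar ^ 2 * a i) :=
            Finset.sum_congr rfl fun i _ => by ring
        _ = _ := by
            rw [Finset.sum_add_distrib, Finset.sum_sub_distrib, ← Finset.mul_sum,
              ← Finset.mul_sum]
    rw [hv] at hTv
    rw [hu]
    have h0' := mul_le_mul_of_nonneg_left hE0
      (by positivity : (0:ℝ) ≤ 1 + 2 * bstar ^ 2 + 3 * bstar ^ 4)
    have h1' := mul_le_mul_of_nonneg_left hE1
      (by positivity : (0:ℝ) ≤ 2 + 12 * bstar ^ 2)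
    have h2' := mul_le_mul_of_nonneg_left hE2 (by norm_num : (0:ℝ) ≤ 3)
    nlinarith [hTv, h0', h1', h2',
      sq_nonneg ((∑ i, a i * b i ^ 2) - astar * bstar ^ 2
        + 2 * bstar * ((∑ i, a i * b i) - astar * bstar)),
      sq_nonneg (2 * bstar * ((∑ i, a i * b i) - astar * bstar)
        + bstar ^ 2 * ((∑ i, a i) - astar)),
      sq_nonneg ((∑ i, a i * b i ^ 2) - astar * bstar ^ 2
        - bstar ^ 2 * ((∑ i, a i) - astar)),
      sq_nonneg (((∑ i, a i * b i) - astar * bstar) + bstar * ((∑ i, a i) - astar))]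

theorem statement18 (H : ℕ) (astar bstar : ℝ) (hastar : 0 < astar) (hbstar : 0 < bstar) :
    ∃ U : Set ((Fin H → ℝ) × (Fin H → ℝ)),
      IsOpen U ∧
      {w : (Fin H → ℝ) × (Fin H → ℝ) |
          (∑ i, w.1 i) = astar ∧ ∀ i, w.2 i = bstar} ⊆ U ∧
      ∃ C₁ > (0 : ℝ), ∃ C₂ > (0 : ℝ),
        ∀ w ∈ U, (∀ i, 0 ≤ w.1 i) → (∀ i, 0 < w.2 i) →
          C₁ * ((∑ i, w.1 i - astar) ^ 2
                + (∑ i, (w.1 i * (w.2 i - bstar) ^ 2) ^ 2)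
                + (∑ i, w.1 i * (w.2 i - bstar)) ^ 2)
              ≤ ∑ x ∈ Finset.range (H + 1),
                  (∑ i, w.1 i * w.2 i ^ x - astar * bstar ^ x) ^ 2 ∧
          (∑ x ∈ Finset.range (H + 1),
              (∑ i, w.1 i * w.2 i ^ x - astar * bstar ^ x) ^ 2)
              ≤ C₂ * ((∑ i, w.1 i - astar) ^ 2
                + (∑ i, (w.1 i * (w.2 i - bstar) ^ 2) ^ 2)
                + (∑ i, w.1 i * (w.2 i - bstar)) ^ 2) := by
  have hr0 : (0:ℝ) < min bstar 1 := lt_min hbstar one_pos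
  refine ⟨⋂ i, (fun w : (Fin H → ℝ) × (Fin H → ℝ) => w.2 i) ⁻¹' Metric.ball bstar (min bstar 1),
    isOpen_iInter_of_finite fun i =>
      Metric.isOpen_ball.preimage ((continuous_apply i).comp continuous_snd), ?_, ?_⟩
  · intro w hw
    simp only [Set.mem_iInter, Set.mem_preimage, Metric.mem_ball]
    intro i
    rw [hw.2 i]
    simpa using hr0
  · have hC2nn : (0:ℝ) ≤ ∑ x ∈ Finset.range (H + 1),
        3 * ((bstar ^ x) ^ 2 + ((x : ℝ) * bstar ^ (x - 1)) ^ 2 + auxK bstar x ^ 2 * H) :=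
      Finset.sum_nonneg fun x _ => by positivity
    refine ⟨1 / (6 + 14 * bstar ^ 2 + 3 * bstar ^ 4), by positivity,
      1 + ∑ x ∈ Finset.range (H + 1),
        3 * ((bstar ^ x) ^ 2 + ((x : ℝ) * bstar ^ (x - 1)) ^ 2 + auxK bstar x ^ 2 * H),
      by linarith, ?_⟩
    intro w hw ha hb
    have hbr : ∀ i, |w.2 i - bstar| < min bstar 1 := by
      intro i
      have h := Set.mem_iInter.mp hw i
      simpa [Real.dist_eq] using h
    constructor
    · have hlow := lowerB H astar bstar hbstar w.1 w.2 ha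
        (fun i => ((hbr i).trans_le (min_le_right _ _)).le)
      calc (1 / (6 + 14 * bstar ^ 2 + 3 * bstar ^ 4)) * ((∑ i, w.1 i - astar) ^ 2
                + (∑ i, (w.1 i * (w.2 i - bstar) ^ 2) ^ 2)
                + (∑ i, w.1 i * (w.2 i - bstar)) ^ 2)
          ≤ (1 / (6 + 14 * bstar ^ 2 + 3 * bstar ^ 4)) * ((6 + 14 * bstar ^ 2 + 3 * bstar ^ 4)
              * ∑ x ∈ Finset.range (H + 1),
                  (∑ i, w.1 i * w.2 i ^ x - astar * bstar ^ x) ^ 2) :=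
            mul_le_mul_of_nonneg_left hlow (by positivity)
        _ = ∑ x ∈ Finset.range (H + 1),
              (∑ i, w.1 i * w.2 i ^ x - astar * bstar ^ x) ^ 2 := by
            rw [← mul_assoc, one_div_mul_cancel (by positivity), one_mul]
    · exact upperB H astar bstar hbstar w.1 w.2 ha
        (fun i => ((hbr i).trans_le (min_le_left _ _)).le)
end
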